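/- arXiv:2106.02919 — 5 statements merged into one kernel-verified Lean document; each statement's English description precedes it below -/
import Mathlib

section
/- Let G be a connected simple graph with vertex set V(G) and edge set E(G) such that |E(G)| is even and the maximum degree of G is at most 3. Then the number of perfect matchings of the line graph L(G) equals 2^(|E(G)| - |V(G)| + 1). -/
variable {V : Type*}

/-- The vertex-edge graph (middle graph) of `G`: vertices are `V(G) ⊕ E(G)`;
two `e`-vertices are adjacent iff the corresponding edges of `G` are distinct and share
an endpoint; a `v`-vertex and an `e`-vertex are adjacent iff the vertex is an endpoint of
the edge; no two `v`-vertices are adjacent. -/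
def middleGraph (G : SimpleGraph V) : SimpleGraph (V ⊕ G.edgeSet) where
  Adj a b :=
    match a, b with
    | Sum.inl _, Sum.inl _ => False
    | Sum.inl u, Sum.inr e => u ∈ (e : Sym2 V)
    | Sum.inr e, Sum.inl u => u ∈ (e : Sym2 V)
    | Sum.inr e, Sum.inr f => e ≠ f ∧ ∃ v, v ∈ (e : Sym2 V) ∧ v ∈ (f : Sym2 V)
  symm := by
    constructor
    rintro (u | e) (v | f) h
    · exact h.elim
    · exact h
    · exact h
    · exact ⟨h.1.symm, h.2.imp fun v hv => ⟨hv.2, hv.1⟩⟩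
  loopless := by
    constructor
    rintro (u | e) h
    · exact h
    · exact h.1 rfl

/-- The line graph of `G`, with vertex set the edge set of `G`; two edges are adjacent
iff they are distinct and share an endpoint. -/
def lineGraph (G : SimpleGraph V) : SimpleGraph G.edgeSet where
  Adj e f := e ≠ f ∧ ∃ v, v ∈ (e : Sym2 V) ∧ v ∈ (f : Sym2 V)
  symm := ⟨fun e f h => ⟨h.1.symm, h.2.imp fun v hv => ⟨hv.2, hv.1⟩⟩⟩
  loopless := ⟨fun e h => h.1 rfl⟩

/-- `P` is a perfect matching (dimer covering) of `H`, viewed as a set of edges: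
all members are edges of `H`, distinct members share no vertex, and every vertex of `H`
lies in some member. -/
def IsPerfMatchSet {W : Type*} (H : SimpleGraph W) (P : Set (Sym2 W)) : Prop :=
  P ⊆ H.edgeSet ∧
  (∀ p ∈ P, ∀ q ∈ P, p ≠ q → ∀ a, a ∈ p → a ∉ q) ∧
  (∀ w : W, ∃ p ∈ P, w ∈ p)

/-- The number of perfect matchings (dimer coverings) of `H`. -/
noncomputable def pmCount {W : Type*} (H : SimpleGraph W) : ℕ :=
  {P : Set (Sym2 W) | IsPerfMatchSet H P}.ncard

namespace LGPM

open Finset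

lemma zmod2_cases : ∀ a : ZMod 2, a = 0 ∨ a = 1 := by decide

lemma zmod2_ne_zero {a : ZMod 2} (h : a ≠ 0) : a = 1 := by
  rcases zmod2_cases a with h' | h' <;> simp_all

/-- Even cardinality from a fixed-point-free involution. -/
lemma even_card_of_invol {α : Type*} [DecidableEq α] (s : Finset α) (f : α → α)
    (hf : ∀ a ∈ s, f a ∈ s) (hne : ∀ a ∈ s, f a ≠ a) (hinv : ∀ a ∈ s, f (f a) = a) :
    Even s.card := by
  induction s using Finset.strongInduction with
  | _ s ih =>
    rcases s.eq_empty_or_nonempty with rfl | ⟨a, ha⟩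
    · simp
    · have hfa : f a ∈ s := hf a ha
      have hfa' : f a ∈ s.erase a := Finset.mem_erase.2 ⟨hne a ha, hfa⟩
      set t := (s.erase a).erase (f a) with ht
      have htsub : t ⊂ s := by
        refine Finset.ssubset_of_subset_of_ssubset ?_ (Finset.erase_ssubset ha)
        exact Finset.erase_subset _ _
      have htmem : ∀ b ∈ t, b ∈ s ∧ b ≠ a ∧ b ≠ f a := by
        intro b hb
        simp only [ht, Finset.mem_erase] at hb
        exact ⟨hb.2.2, hb.2.1, hb.1⟩
      have hev : Even t.card := by
        refine ih t htsub (fun b hb => ?_) (fun b hb => hne b (htmem b hb).1)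
          (fun b hb => hinv b (htmem b hb).1)
        obtain ⟨hbs, hba, hbfa⟩ := htmem b hb
        have h1 : f b ∈ s := hf b hbs
        have h2 : f b ≠ f a := fun h => hba (show b = a by rw [← hinv b hbs, h, hinv a ha])
        have h3 : f b ≠ a := fun h => hbfa (show b = f a by rw [← hinv b hbs, h])
        simp only [ht, Finset.mem_erase]
        exact ⟨h2, h3, h1⟩
      have hcard : t.card = s.card - 1 - 1 := by
        rw [ht, Finset.card_erase_of_mem hfa', Finset.card_erase_of_mem ha]
      have h2le : 2 ≤ s.card := Finset.one_lt_card.2 ⟨a, ha, f a, hfa, (hne a ha).symm⟩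
      obtain ⟨k, hk⟩ := hev
      exact ⟨k + 1, by omega⟩

variable [Fintype V] [DecidableEq V] (G : SimpleGraph V) [DecidableRel G.Adj]

noncomputable def ep0 (e : G.edgeSet) : V := (e : Sym2 V).out.1

lemma ep0_mem (e : G.edgeSet) : ep0 G e ∈ (e : Sym2 V) := Sym2.out_fst_mem _

noncomputable def ep1 (e : G.edgeSet) : V := Sym2.Mem.other (ep0_mem G e)

lemma ep1_mem (e : G.edgeSet) : ep1 G e ∈ (e : Sym2 V) := Sym2.other_mem _

lemma ep1_ne (e : G.edgeSet) : ep1 G e ≠ ep0 G e :=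
  Sym2.other_ne (G.not_isDiag_of_mem_edgeSet e.2) _

lemma ep_spec (e : G.edgeSet) : s(ep0 G e, ep1 G e) = (e : Sym2 V) := Sym2.other_spec _

lemma mem_iff_ep {e : G.edgeSet} {v : V} :
    v ∈ (e : Sym2 V) ↔ v = ep0 G e ∨ v = ep1 G e := by
  conv_lhs => rw [← ep_spec G e]
  exact Sym2.mem_iff

/-- The assignment of endpoints determined by `x : E → ZMod 2`. -/
noncomputable def sig (x : G.edgeSet → ZMod 2) (e : G.edgeSet) : V :=
  if x e = 0 then ep0 G e else ep1 G e

lemma sig_mem (x : G.edgeSet → ZMod 2) (e : G.edgeSet) : sig G x e ∈ (e : Sym2 V) := by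
  unfold sig; split
  · exact ep0_mem G e
  · exact ep1_mem G e

/-- The incidence linear map over `ZMod 2`. -/
noncomputable def T : (G.edgeSet → ZMod 2) →ₗ[ZMod 2] (V → ZMod 2) where
  toFun x := fun v => ∑ e, x e * (if v ∈ (e : Sym2 V) then 1 else 0)
  map_add' x y := by
    funext v
    simp only [Pi.add_apply]
    rw [← Finset.sum_add_distrib]
    exact Finset.sum_congr rfl fun e _ => add_mul _ _ _
  map_smul' c x := by
    funext v
    simp only [Pi.smul_apply, smul_eq_mul, RingHom.id_apply]
    rw [Finset.mul_sum]
    exact Finset.sum_congr rfl fun e _ => mul_assoc _ _ _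

/-- The target vector. -/
noncomputable def bvec : V → ZMod 2 := fun v => ∑ e : G.edgeSet, if ep0 G e = v then 1 else 0

/-- The parity counting function of an assignment. -/
noncomputable def cnt (σ : G.edgeSet → V) (v : V) : ZMod 2 :=
  ∑ e, if σ e = v then 1 else 0

lemma cnt_sig (x : G.edgeSet → ZMod 2) (v : V) :
    cnt G (sig G x) v = bvec G v + T G x v := by
  unfold cnt bvec T
  simp only [LinearMap.coe_mk, AddHom.coe_mk]
  rw [← Finset.sum_add_distrib]
  refine Finset.sum_congr rfl fun e _ => ?_
  rcases zmod2_cases (x e) with hx | hx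
  · simp [sig, hx]
  · have hne := ep1_ne G e
    rw [hx, one_mul]
    have hsig1 : sig G x e = ep1 G e := by simp [sig, hx]
    rw [hsig1]
    by_cases h0 : ep0 G e = v
    · have h1 : ep1 G e ≠ v := fun h => hne (h.trans h0.symm)
      have hv : v ∈ (e : Sym2 V) := (mem_iff_ep G).2 (Or.inl h0.symm)
      rw [if_neg h1, if_pos h0, if_pos hv]
      decide
    · by_cases h1 : ep1 G e = v
      · have hv : v ∈ (e : Sym2 V) := (mem_iff_ep G).2 (Or.inr h1.symm)
        rw [if_pos h1, if_neg h0, if_pos hv]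
        decide
      · have hv : v ∉ (e : Sym2 V) := by
          rw [mem_iff_ep G]
          rintro (h | h)
          exacts [h0 h.symm, h1 h.symm]
        rw [if_neg h1, if_neg h0, if_neg hv]
        decide

lemma cnt_eq_zero_iff (σ : G.edgeSet → V) (v : V) :
    cnt G σ v = 0 ↔ Even (univ.filter (fun e => σ e = v)).card := by
  unfold cnt
  rw [Finset.sum_boole, ZMod.natCast_eq_zero_iff, Nat.even_iff]
  omega

lemma fiber_card_le (σ : G.edgeSet → V) (hmem : ∀ e : G.edgeSet, σ e ∈ (e : Sym2 V)) (v : V) :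
    (univ.filter (fun e => σ e = v)).card ≤ G.degree v := by
  rw [← SimpleGraph.card_incidenceFinset_eq_degree]
  refine Finset.card_le_card_of_injOn (fun e => (e : Sym2 V)) (fun e he => ?_)
    (fun a _ b _ h => Subtype.ext h)
  rw [Finset.mem_coe, Finset.mem_filter] at he
  rw [Finset.mem_coe, SimpleGraph.mem_incidenceFinset]
  have := hmem e
  rw [he.2] at this
  exact ⟨e.2, this⟩

lemma common_unique {e f : G.edgeSet} (hef : e ≠ f) {v w : V}
    (hve : v ∈ (e : Sym2 V)) (hvf : v ∈ (f : Sym2 V))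
    (hwe : w ∈ (e : Sym2 V)) (hwf : w ∈ (f : Sym2 V)) : v = w := by
  by_contra h
  have he : (e : Sym2 V) = s(v, w) := (Sym2.mem_and_mem_iff h).1 ⟨hve, hwe⟩
  have hf : (f : Sym2 V) = s(v, w) := (Sym2.mem_and_mem_iff h).1 ⟨hvf, hwf⟩
  exact hef (Subtype.ext (he.trans hf.symm))

/-- The set of pairs determined by an assignment. -/
def pairsOf (σ : G.edgeSet → V) : Set (Sym2 G.edgeSet) :=
  {p | ∃ e f : G.edgeSet, p = s(e, f) ∧ e ≠ f ∧ σ e = σ f}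

lemma fiber_eq_pair (hdeg : ∀ v : V, G.degree v ≤ 3) {σ : G.edgeSet → V}
    (hmem : ∀ e : G.edgeSet, σ e ∈ (e : Sym2 V))
    (hev : ∀ v, Even (univ.filter (fun f => σ f = v)).card) (e : G.edgeSet) :
    ∃ f, f ≠ e ∧ univ.filter (fun g => σ g = σ e) = {e, f} := by
  set s := univ.filter (fun g => σ g = σ e) with hs
  have he : e ∈ s := by simp [hs]
  have h3 : s.card ≤ 3 := (fiber_card_le G σ hmem (σ e)).trans (hdeg (σ e))
  have h1 : 1 ≤ s.card := Finset.card_pos.2 ⟨e, he⟩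
  obtain ⟨k, hk⟩ := hev (σ e)
  have hk' : s.card = k + k := hk
  have h2 : s.card = 2 := by omega
  obtain ⟨a, b, hab, habs⟩ := Finset.card_eq_two.1 h2
  have hem : e = a ∨ e = b := by
    have := habs ▸ he; simpa using this
  rcases hem with rfl | rfl
  · exact ⟨b, fun h => hab h.symm, habs⟩
  · exact ⟨a, fun h => hab h, by rw [habs, Finset.pair_comm]⟩

lemma pair_eq_of_mem {α : Type*} {a b e f : α} (hef : e ≠ f)
    (he : e = a ∨ e = b) (hf : f = a ∨ f = b) : s(e, f) = s(a, b) := by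
  rcases he with rfl | rfl <;> rcases hf with rfl | rfl
  · exact absurd rfl hef
  · rfl
  · exact Sym2.eq_swap
  · exact absurd rfl hef

end LGPM

namespace LGPM
open Finset
variable {V : Type*} [Fintype V] [DecidableEq V] (G : SimpleGraph V) [DecidableRel G.Adj]

lemma isPM_pairsOf (hdeg : ∀ v : V, G.degree v ≤ 3) {σ : G.edgeSet → V}
    (hmem : ∀ e : G.edgeSet, σ e ∈ (e : Sym2 V))
    (hev : ∀ v, Even (univ.filter (fun f => σ f = v)).card) :
    IsPerfMatchSet (lineGraph G) (pairsOf G σ) := by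
  refine ⟨?_, ?_, ?_⟩
  · rintro p ⟨e, f, rfl, hef, hσ⟩
    rw [SimpleGraph.mem_edgeSet]
    exact (show e ≠ f ∧ ∃ v, v ∈ (e : Sym2 V) ∧ v ∈ (f : Sym2 V) from ⟨hef, σ e, hmem e, hσ ▸ hmem f⟩)
  · rintro p ⟨e, f, rfl, hef, hσef⟩ q ⟨g, h, rfl, hgh, hσgh⟩ hpq a hap haq
    apply hpq
    rw [Sym2.mem_iff] at hap haq
    have hσae : σ a = σ e := by rcases hap with rfl | rfl; exacts [rfl, hσef.symm]
    have hσag : σ a = σ g := by rcases haq with rfl | rfl; exacts [rfl, hσgh.symm]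
    obtain ⟨b, hba, hfib⟩ := fiber_eq_pair G hdeg hmem hev a
    have hfib' : ∀ c : G.edgeSet, σ c = σ a → (c = a ∨ c = b) := by
      intro c hc
      have : c ∈ univ.filter (fun g => σ g = σ a) := by simp [hc]
      rw [hfib] at this
      simpa using this
    have hp : s(e, f) = s(a, b) :=
      pair_eq_of_mem hef (hfib' e hσae.symm) (hfib' f (hσef ▸ hσae).symm)
    have hq : s(g, h) = s(a, b) :=
      pair_eq_of_mem hgh (hfib' g hσag.symm) (hfib' h (hσgh ▸ hσag).symm)
    rw [hp, hq]
  · intro e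
    obtain ⟨f, hfe, hfib⟩ := fiber_eq_pair G hdeg hmem hev e
    have hf : f ∈ univ.filter (fun g => σ g = σ e) := by rw [hfib]; simp
    rw [Finset.mem_filter] at hf
    exact ⟨s(e, f), ⟨e, f, rfl, fun h => hfe h.symm, hf.2.symm⟩, Sym2.mem_mk_left e f⟩

lemma sig_inj {x y : G.edgeSet → ZMod 2} (h : sig G x = sig G y) : x = y := by
  funext e
  have he := congrFun h e
  by_contra hxy
  rcases zmod2_cases (x e) with hx | hx <;> rcases zmod2_cases (y e) with hy | hy
  · exact hxy (hx.trans hy.symm)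
  · rw [sig, sig, if_pos hx, if_neg (hy ▸ one_ne_zero)] at he
    exact ep1_ne G e he.symm
  · rw [sig, sig, if_neg (hx ▸ one_ne_zero), if_pos hy] at he
    exact ep1_ne G e he
  · exact hxy (hx.trans hy.symm)

lemma pairsOf_inj (hdeg : ∀ v : V, G.degree v ≤ 3) {σ τ : G.edgeSet → V}
    (hmemσ : ∀ e : G.edgeSet, σ e ∈ (e : Sym2 V))
    (hevσ : ∀ v, Even (univ.filter (fun f => σ f = v)).card)
    (hmemτ : ∀ e : G.edgeSet, τ e ∈ (e : Sym2 V))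
    (h : pairsOf G σ = pairsOf G τ) : σ = τ := by
  funext e
  obtain ⟨f, hfe, hfib⟩ := fiber_eq_pair G hdeg hmemσ hevσ e
  have hf : f ∈ univ.filter (fun g => σ g = σ e) := by rw [hfib]; simp
  rw [Finset.mem_filter] at hf
  have hp : s(e, f) ∈ pairsOf G σ := ⟨e, f, rfl, fun h' => hfe h'.symm, hf.2.symm⟩
  rw [h] at hp
  obtain ⟨g, h', heq, hgh, hτ⟩ := hp
  have hτef : τ e = τ f := by
    rcases Sym2.eq_iff.1 heq with ⟨rfl, rfl⟩ | ⟨rfl, rfl⟩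
    · exact hτ
    · exact hτ.symm
  have hσef : σ e ∈ (f : Sym2 V) := hf.2.symm ▸ hmemσ f
  have hτef' : τ e ∈ (f : Sym2 V) := hτef ▸ hmemτ f
  exact common_unique G (fun h'' => hfe h''.symm) (hmemσ e) hσef (hmemτ e) hτef'

lemma pairsOf_surj (hdeg : ∀ v : V, G.degree v ≤ 3) {P : Set (Sym2 G.edgeSet)}
    (hP : IsPerfMatchSet (lineGraph G) P) :
    ∃ x : G.edgeSet → ZMod 2,
      (∀ v, Even (univ.filter (fun e => sig G x e = v)).card) ∧ pairsOf G (sig G x) = P := by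
  obtain ⟨hPsub, hPdis, hPcov⟩ := hP
  have H : ∀ e : G.edgeSet, ∃ (f : G.edgeSet) (v : V), s(e, f) ∈ P ∧ e ≠ f ∧
      v ∈ (e : Sym2 V) ∧ v ∈ (f : Sym2 V) := by
    intro e
    obtain ⟨p, hpP, hep⟩ := hPcov e
    obtain ⟨f, rfl⟩ := Sym2.mem_iff_exists.1 hep
    have hadj : (lineGraph G).Adj e f := (SimpleGraph.mem_edgeSet _).1 (hPsub hpP)
    obtain ⟨hef, v, hv1, hv2⟩ := (hadj : e ≠ f ∧ ∃ v, v ∈ (e : Sym2 V) ∧ v ∈ (f : Sym2 V))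
    exact ⟨f, v, hpP, hef, hv1, hv2⟩
  choose pa vv hmemP hne hv1 hv2 using H
  -- uniqueness of the pair containing e
  have huniq : ∀ (e : G.edgeSet) (p : Sym2 G.edgeSet), p ∈ P → e ∈ p → p = s(e, pa e) := by
    intro e p hp hep
    by_contra hne'
    exact hPdis p hp (s(e, pa e)) (hmemP e) hne' e hep (Sym2.mem_mk_left _ _)
  have hinv : ∀ e, pa (pa e) = e := by
    intro e
    have h1 : s(e, pa e) = s(pa e, pa (pa e)) :=
      huniq (pa e) _ (hmemP e) (Sym2.mem_mk_right _ _)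
    rcases Sym2.eq_iff.1 h1 with ⟨he, _⟩ | ⟨he, _⟩
    · exact absurd he (hne e)
    · exact he.symm
  have hvv : ∀ e, vv (pa e) = vv e := by
    intro e
    have h1 : vv (pa e) ∈ (e : Sym2 V) := by
      have := hv2 (pa e); rw [hinv e] at this; exact this
    exact common_unique G (hne e) h1 (hv1 (pa e)) (hv1 e) (hv2 e)
  set x : G.edgeSet → ZMod 2 := fun e => if vv e = ep0 G e then 0 else 1 with hx
  have hsig : ∀ e, sig G x e = vv e := by
    intro e
    by_cases h : vv e = ep0 G e
    · rw [sig, hx]; simp [h]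
    · have h1 : vv e = ep1 G e := by
        rcases (mem_iff_ep G).1 (hv1 e) with h' | h'
        · exact absurd h' h
        · exact h'
      have hx1 : x e = 1 := if_neg h
      rw [sig, hx1, if_neg one_ne_zero, h1]
  refine ⟨x, ?_, ?_⟩
  · intro v
    refine even_card_of_invol _ pa ?_ ?_ ?_
    · intro e he
      rw [Finset.mem_filter] at he ⊢
      refine ⟨Finset.mem_univ _, ?_⟩
      rw [hsig, hvv, ← hsig e, he.2]
    · intro e _
      exact fun h => hne e h.symm
    · intro e _
      exact hinv e
  · ext p
    induction p with
    | _ e f =>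
      constructor
      · rintro ⟨g, h, heq, hgh, hσ⟩
        have hfib := fiber_eq_pair G hdeg (sig_mem G x) (fun v => by
          refine even_card_of_invol _ pa ?_ ?_ ?_
          · intro e' he'
            rw [Finset.mem_filter] at he' ⊢
            exact ⟨Finset.mem_univ _, by rw [hsig, hvv, ← hsig e', he'.2]⟩
          · intro e' _
            exact fun h' => hne e' h'.symm
          · intro e' _
            exact hinv e') g
        obtain ⟨b, hbg, hfib⟩ := hfib
        have hmemfib : ∀ c : G.edgeSet, sig G x c = sig G x g → (c = g ∨ c = b) := by
          intro c hc
          have : c ∈ univ.filter (fun g' => sig G x g' = sig G x g) := by simp [hc]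
          rw [hfib] at this
          simpa using this
        have hpag : pa g = b := by
          rcases hmemfib (pa g) (by rw [hsig, hvv, hsig]) with h' | h'
          · exact absurd h' (fun h'' => hne g h''.symm : pa g ≠ g)
          · exact h'
        have hhb : h = b := by
          rcases hmemfib h hσ.symm with h' | h'
          · exact absurd h' (fun h'' => hgh h''.symm)
          · exact h'
        rw [heq, hhb, ← hpag]
        exact hmemP g
      · intro hp
        have he : e ∈ s(e, f) := Sym2.mem_mk_left _ _
        have h1 : s(e, f) = s(e, pa e) := huniq e _ hp he
        have hf : f = pa e := Sym2.congr_right.1 h1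
        refine ⟨e, f, rfl, ?_, ?_⟩
        · rintro rfl
          exact ((lineGraph G).not_isDiag_of_mem_edgeSet (hPsub hp)) (Sym2.mk_isDiag_iff.2 rfl)
        · rw [hsig, hsig, hf, hvv]
end LGPM

namespace LGPM
open Finset
variable {V : Type*} [Fintype V] [DecidableEq V] (G : SimpleGraph V) [DecidableRel G.Adj]

/-- The sum functional. -/
noncomputable def sumF : (V → ZMod 2) →ₗ[ZMod 2] ZMod 2 where
  toFun y := ∑ v, y v
  map_add' y z := by simp [Finset.sum_add_distrib]
  map_smul' c y := by simp [Finset.mul_sum]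

lemma card_endpoints (e : G.edgeSet) :
    (univ.filter (fun v => v ∈ (e : Sym2 V))).card = 2 := by
  have : univ.filter (fun v => v ∈ (e : Sym2 V)) = {ep0 G e, ep1 G e} := by
    ext v
    simp [mem_iff_ep G]
  rw [this, Finset.card_pair (ep1_ne G e).symm]

lemma sumF_T (x : G.edgeSet → ZMod 2) : sumF (T G x) = 0 := by
  unfold sumF T
  simp only [LinearMap.coe_mk, AddHom.coe_mk]
  rw [Finset.sum_comm]
  refine Finset.sum_eq_zero fun e _ => ?_
  rw [← Finset.mul_sum, Finset.sum_boole, card_endpoints,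
    (by decide : ((2 : ℕ) : ZMod 2) = 0), mul_zero]

lemma range_T_le : LinearMap.range (T G) ≤ LinearMap.ker (sumF (V := V)) := by
  rintro y ⟨x, rfl⟩
  exact sumF_T G x

/-- the indicator of a pair of vertices -/
noncomputable def pind (u w : V) : V → ZMod 2 :=
  fun v => (if v = u then 1 else 0) + (if v = w then 1 else 0)

lemma pind_mem_range {u w : V} (p : G.Walk u w) : pind u w ∈ LinearMap.range (T G) := by
  induction p with
  | nil =>
    refine ⟨0, ?_⟩
    rw [map_zero]
    funext v
    unfold pind
    rw [CharTwo.add_self_eq_zero]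
    rfl
  | @cons u a w huv q ih =>
    have h1 : pind u a ∈ LinearMap.range (T G) := by
      refine ⟨fun e => if e = ⟨s(u, a), huv⟩ then 1 else 0, ?_⟩
      funext v
      show (∑ e : G.edgeSet, (if e = ⟨s(u, a), huv⟩ then (1 : ZMod 2) else 0) *
        (if v ∈ (e : Sym2 V) then 1 else 0)) = pind u a v
      rw [Finset.sum_congr rfl fun b _ => boole_mul _ _,
        Finset.sum_ite_eq' univ (⟨s(u, a), huv⟩ : G.edgeSet)
          (fun b => if v ∈ (b : Sym2 V) then (1 : ZMod 2) else 0),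
        if_pos (Finset.mem_univ _)]
      unfold pind
      have hua : u ≠ a := G.ne_of_adj huv
      by_cases h0 : v = u <;> by_cases h1 : v = a
      · exact absurd (h0.symm.trans h1) hua
      · simp [h0, h1, Sym2.mem_iff, hua, hua.symm]
      · simp [h0, h1, Sym2.mem_iff, hua, hua.symm]
      · simp [h0, h1, Sym2.mem_iff]
    obtain ⟨x1, hx1⟩ := h1
    obtain ⟨x2, hx2⟩ := ih
    refine ⟨x1 + x2, ?_⟩
    rw [map_add, hx1, hx2]
    funext v
    simp only [Pi.add_apply]
    unfold pind
    exact (show ∀ b c d : ZMod 2, (b + c) + (c + d) = b + d by decide) _ _ _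

lemma ker_le_range_T (hconn : G.Connected) :
    LinearMap.ker (sumF (V := V)) ≤ LinearMap.range (T G) := by
  intro y hy
  have hy' : ∑ v, y v = 0 := hy
  clear hy
  generalize hn : (univ.filter (fun v => y v ≠ 0)).card = n
  induction n using Nat.strong_induction_on generalizing y with
  | _ n ih =>
    rcases Nat.eq_zero_or_pos n with rfl | hpos
    · have : y = 0 := by
        funext v
        by_contra h
        have h2 : y v ≠ 0 := fun hc => h hc
        have : v ∈ univ.filter (fun v => y v ≠ 0) := by simp [h2]
        rw [Finset.card_eq_zero.1 hn] at this
        exact absurd this (Finset.notMem_empty v)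
      rw [this]
      exact Submodule.zero_mem _
    · have hne : (univ.filter (fun v => y v ≠ 0)).Nonempty := by
        rw [← Finset.card_pos, hn]; exact hpos
      obtain ⟨u, hu⟩ := hne
      have hu2 : y u ≠ 0 := (Finset.mem_filter.1 hu).2
      have hyu : y u = 1 := zmod2_ne_zero hu2
      have hex : ∃ w, w ≠ u ∧ y w ≠ 0 := by
        by_contra hcon
        push_neg at hcon
        have hsub : univ.filter (fun v => y v ≠ 0) = {u} := by
          ext v
          simp only [Finset.mem_filter, Finset.mem_univ, true_and, Finset.mem_singleton]
          constructor
          · intro h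
            by_contra h'
            exact h (hcon v h')
          · rintro rfl; exact hu2
        have : ∑ v, y v = y u := by
          rw [← Finset.sum_filter_ne_zero univ, hsub, Finset.sum_singleton]
        rw [hy', hyu] at this
        exact one_ne_zero this.symm
      obtain ⟨w, hwu, hyw⟩ := hex
      have hyw1 : y w = 1 := zmod2_ne_zero hyw
      set y' : V → ZMod 2 := y + pind u w with hy'def
      have hy'u : y' u = 0 := by
        simp only [hy'def, Pi.add_apply, pind, if_pos rfl, if_neg (Ne.symm hwu)]
        rw [hyu]; decide
      have hy'w : y' w = 0 := by
        simp only [hy'def, Pi.add_apply, pind, if_pos rfl, if_neg hwu]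
        rw [hyw1]; decide
      have hy'v : ∀ v, v ≠ u → v ≠ w → y' v = y v := by
        intro v h1 h2
        simp [hy'def, pind, h1, h2]
      have hsum' : ∑ v, y' v = 0 := by
        have hpw : ∑ v, pind u w v = 0 := by
          unfold pind
          rw [Finset.sum_add_distrib, Finset.sum_ite_eq' univ u (fun _ => (1:ZMod 2)),
            Finset.sum_ite_eq' univ w (fun _ => (1:ZMod 2))]
          simp
          decide
        simp only [hy'def, Pi.add_apply]
        rw [Finset.sum_add_distrib, hy', hpw, add_zero]
      have hfilter : univ.filter (fun v => y' v ≠ 0) =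
          ((univ.filter (fun v => y v ≠ 0)).erase u).erase w := by
        ext v
        simp only [Finset.mem_filter, Finset.mem_univ, true_and, Finset.mem_erase]
        by_cases h1 : v = u
        · subst h1; simp [hy'u]
        · by_cases h2 : v = w
          · subst h2; simp [hy'w, hwu]
          · rw [hy'v v h1 h2]
            simp [h1, h2]
      have hcard : (univ.filter (fun v => y' v ≠ 0)).card = n - 2 := by
        rw [hfilter, Finset.card_erase_of_mem, Finset.card_erase_of_mem hu, hn]
        · rfl
        · rw [Finset.mem_erase, Finset.mem_filter]
          exact ⟨hwu, Finset.mem_univ _, hyw⟩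
      have h2n : 2 ≤ n := by
        rw [← hn]
        exact Finset.one_lt_card.2 ⟨u, by simp [hu2], w, by simp [hyw], (Ne.symm hwu)⟩
      have hy'range : y' ∈ LinearMap.range (T G) :=
        ih (n - 2) (by omega) hsum' hcard
      have hwalk : pind u w ∈ LinearMap.range (T G) :=
        pind_mem_range G ((hconn u w).some)
      have : y = y' + pind u w := by
        funext v
        simp only [hy'def, Pi.add_apply]
        rw [add_assoc, CharTwo.add_self_eq_zero, add_zero]
      rw [this]
      exact Submodule.add_mem _ hy'range hwalk

lemma bvec_mem_range (hconn : G.Connected) (heven : Even (Fintype.card G.edgeSet)) :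
    bvec G ∈ LinearMap.range (T G) := by
  apply ker_le_range_T G hconn
  show ∑ v, bvec G v = 0
  unfold bvec
  rw [Finset.sum_comm]
  have : ∀ e : G.edgeSet, ∑ v : V, (if ep0 G e = v then (1 : ZMod 2) else 0) = 1 := by
    intro e
    rw [Finset.sum_ite_eq univ (ep0 G e) (fun _ => (1 : ZMod 2))]
    simp
  rw [Finset.sum_congr rfl fun e _ => this e]
  simp only [Finset.sum_const, nsmul_eq_mul, mul_one, Finset.card_univ]
  obtain ⟨k, hk⟩ := heven
  rw [hk]
  push_cast
  rw [CharTwo.add_self_eq_zero]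

end LGPM

namespace LGPM
open Finset
variable {V : Type*} [Fintype V] [DecidableEq V] (G : SimpleGraph V) [DecidableRel G.Adj]

lemma mem_iff_even (x : G.edgeSet → ZMod 2) :
    T G x = bvec G ↔ ∀ v, Even (univ.filter (fun e => sig G x e = v)).card := by
  rw [funext_iff]
  apply forall_congr'
  intro v
  rw [← cnt_eq_zero_iff, cnt_sig]
  constructor
  · intro h; rw [h]; exact CharTwo.add_self_eq_zero _
  · intro h
    exact (show ∀ a b : ZMod 2, a + b = 0 → b = a by decide) _ _ h

lemma main_bijOn (hdeg : ∀ v : V, G.degree v ≤ 3) :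
    Set.BijOn (fun x => pairsOf G (sig G x)) {x : G.edgeSet → ZMod 2 | T G x = bvec G}
      {P : Set (Sym2 G.edgeSet) | IsPerfMatchSet (lineGraph G) P} := by
  refine ⟨?_, ?_, ?_⟩
  · intro x hx
    exact isPM_pairsOf G hdeg (sig_mem G x) ((mem_iff_even G x).1 hx)
  · intro x hx y hy h
    exact sig_inj G (pairsOf_inj G hdeg (sig_mem G x) ((mem_iff_even G x).1 hx)
      (sig_mem G y) h)
  · intro P hP
    obtain ⟨x, hev, hPx⟩ := pairsOf_surj G hdeg hP
    exact ⟨x, (mem_iff_even G x).2 hev, hPx⟩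

end LGPM


/-- If `G` is a connected simple graph with an even number of edges and
maximum degree at most `3`, then the number of perfect matchings of the line graph `L(G)`
is `2 ^ (|E(G)| - |V(G)| + 1)`. -/
theorem line_graph_pm_count {V : Type*} [Fintype V] [DecidableEq V]
    (G : SimpleGraph V) [DecidableRel G.Adj]
    (hconn : G.Connected) (heven : Even G.edgeFinset.card)
    (hdeg : ∀ v : V, G.degree v ≤ 3) :
    pmCount (lineGraph G) = 2 ^ (G.edgeFinset.card + 1 - Fintype.card V) := by
  classical
  open LGPM in
  have hm : G.edgeFinset.card = Fintype.card G.edgeSet := by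
    rw [SimpleGraph.edgeFinset, Set.toFinset_card]
  have heven' : Even (Fintype.card G.edgeSet) := hm ▸ heven
  have h1 : pmCount (lineGraph G) =
      Nat.card {x : G.edgeSet → ZMod 2 | LGPM.T G x = LGPM.bvec G} := by
    rw [pmCount, ← Nat.card_coe_set_eq]
    exact (Nat.card_congr ((LGPM.main_bijOn G hdeg).equiv _)).symm
  obtain ⟨x0, hx0⟩ := LGPM.bvec_mem_range G hconn heven'
  have e2 : {x : G.edgeSet → ZMod 2 | LGPM.T G x = LGPM.bvec G} ≃
      LinearMap.ker (LGPM.T G) := by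
    refine ⟨fun x => ⟨x.1 - x0, ?_⟩, fun y => ⟨y.1 + x0, ?_⟩, ?_, ?_⟩
    · have hx := x.2
      simp only [Set.mem_setOf_eq] at hx
      rw [LinearMap.mem_ker, map_sub, hx, hx0, sub_self]
    · have hy := LinearMap.mem_ker.1 y.2
      simp only [Set.mem_setOf_eq]
      rw [map_add, hy, hx0, zero_add]
    · intro x
      apply Subtype.ext
      simp
    · intro y
      apply Subtype.ext
      simp
  have hcard : Nat.card (LinearMap.ker (LGPM.T G)) =
      2 ^ Module.finrank (ZMod 2) (LinearMap.ker (LGPM.T G)) := by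
    rw [Nat.card_eq_fintype_card, Module.card_eq_pow_finrank (K := ZMod 2), ZMod.card]
  have hrank1 : Module.finrank (ZMod 2) (LinearMap.range (LGPM.T G)) +
      Module.finrank (ZMod 2) (LinearMap.ker (LGPM.T G)) = Fintype.card G.edgeSet := by
    rw [LinearMap.finrank_range_add_finrank_ker, Module.finrank_pi]
  have hrangeEq : LinearMap.range (LGPM.T G) = LinearMap.ker (LGPM.sumF (V := V)) :=
    le_antisymm (LGPM.range_T_le G) (LGPM.ker_le_range_T G hconn)
  have hrank2 : Module.finrank (ZMod 2) (LinearMap.range (LGPM.sumF (V := V))) +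
      Module.finrank (ZMod 2) (LinearMap.ker (LGPM.sumF (V := V))) = Fintype.card V := by
    rw [LinearMap.finrank_range_add_finrank_ker, Module.finrank_pi]
  have hsurj : LinearMap.range (LGPM.sumF (V := V)) = ⊤ := by
    rw [LinearMap.range_eq_top]
    intro c
    obtain ⟨v0⟩ := hconn.nonempty
    refine ⟨fun v => if v = v0 then c else 0, ?_⟩
    show (∑ v, _) = c
    rw [Finset.sum_ite_eq' Finset.univ v0 (fun _ => c), if_pos (Finset.mem_univ _)]
  have hr1 : Module.finrank (ZMod 2) (LinearMap.range (LGPM.sumF (V := V))) = 1 := by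
    rw [hsurj, finrank_top, Module.finrank_self]
  have hrr : Module.finrank (ZMod 2) (LinearMap.range (LGPM.T G)) =
      Module.finrank (ZMod 2) (LinearMap.ker (LGPM.sumF (V := V))) := by
    rw [hrangeEq]
  rw [h1, Nat.card_congr e2, hcard]
  congr 1
  omega
end

section
/- Let H be a simple graph with a vertex u of degree 2 whose two neighbors x and y are distinct and non-adjacent in H. Let H' be the graph obtained from H by deleting u and adding the edge xy. Then the number of perfect matchings of the vertex-edge graph M(H) equals the number of perfect matchings of the vertex-edge graph M(H'). -/
variable {V : Type*}

open SimpleGraph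

namespace MGPf

lemma sym2_eq_of_two_mem {α : Type*} {z : Sym2 α} {a b : α}
    (ha : a ∈ z) (hb : b ∈ z) (h : a ≠ b) : z = s(a, b) := by
  induction z using Sym2.inductionOn with
  | hf p q =>
    rw [Sym2.mem_iff] at ha hb
    rcases ha with rfl | rfl <;> rcases hb with rfl | rfl
    · exact absurd rfl h
    · rfl
    · exact Sym2.eq_swap
    · exact absurd rfl h

lemma sym2_map_eq_self {α : Type*} {f : α → α} {z : Sym2 α}
    (h : ∀ a ∈ z, f a = a) : z.map f = z := by
  induction z using Sym2.inductionOn with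
  | hf p q =>
    rw [Sym2.map_pair_eq, h p (by simp), h q (by simp)]

/-- Context for the construction. -/
structure Ctx (V : Type*) where
  H : SimpleGraph V
  u : V
  x : V
  y : V
  hux : H.Adj u x
  huy : H.Adj u y
  hxy : x ≠ y
  hnadj : ¬ H.Adj x y
  hnbr : ∀ v, H.Adj u v → v = x ∨ v = y

namespace Ctx

variable {V : Type*} (c : Ctx V)

abbrev VS := {w : V | w ≠ c.u}

def H' : SimpleGraph c.VS :=
  c.H.induce {w | w ≠ c.u} ⊔
    SimpleGraph.fromEdgeSet {s((⟨c.x, c.hux.ne'⟩ : c.VS), (⟨c.y, c.huy.ne'⟩ : c.VS))}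

def xs : c.VS := ⟨c.x, c.hux.ne'⟩
def ys : c.VS := ⟨c.y, c.huy.ne'⟩

lemma xs_ne_ys : c.xs ≠ c.ys := fun h => c.hxy (congrArg Subtype.val h)

def fE : Sym2 c.VS := s(c.xs, c.ys)

lemma H'_adj {a b : c.VS} : c.H'.Adj a b ↔ c.H.Adj ↑a ↑b ∨ s(a, b) = c.fE := by
  unfold H'
  rw [sup_adj, fromEdgeSet_adj, Set.mem_singleton_iff]
  constructor
  · rintro (h | ⟨h1, h2⟩)
    · exact Or.inl h
    · exact Or.inr h1
  · rintro (h | h)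
    · exact Or.inl h
    · refine Or.inr ⟨h, fun hab => ?_⟩
      subst hab
      have hd : Sym2.IsDiag (c.fE) := h ▸ Sym2.mk_isDiag_iff.2 rfl
      exact c.xs_ne_ys (Sym2.mk_isDiag_iff.1 (show Sym2.IsDiag (s(c.xs, c.ys)) from hd))

lemma fE_mem : c.fE ∈ c.H'.edgeSet :=
  (SimpleGraph.mem_edgeSet _).mpr (c.H'_adj.mpr (Or.inr rfl))

def fS : c.H'.edgeSet := ⟨c.fE, c.fE_mem⟩

open Classical in
noncomputable def pi : V → c.VS := fun v => if h : v = c.u then c.xs else ⟨v, h⟩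

lemma pi_val {v : V} (h : v ≠ c.u) : (c.pi v : V) = v := by
  simp [pi, h]

lemma pi_coe (w : c.VS) : c.pi ↑w = w :=
  Subtype.ext (c.pi_val w.2)

lemma map_val_map_pi {z : Sym2 V} (h : c.u ∉ z) :
    (z.map c.pi).map (Subtype.val) = z := by
  rw [Sym2.map_map]
  exact sym2_map_eq_self (fun a ha => c.pi_val (fun he => h (he ▸ ha)))

lemma map_pi_map_val (z : Sym2 c.VS) : (z.map Subtype.val).map c.pi = z := by
  rw [Sym2.map_map]
  exact sym2_map_eq_self (fun a ha => c.pi_coe a)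

lemma u_not_mem_map_val (z : Sym2 c.VS) : c.u ∉ z.map Subtype.val := by
  rw [Sym2.mem_map]
  rintro ⟨a, _, ha⟩
  exact a.2 ha

lemma edge_with_u {e : Sym2 V} (he : e ∈ c.H.edgeSet) (h : c.u ∈ e) :
    e = s(c.u, c.x) ∨ e = s(c.u, c.y) := by
  obtain ⟨w, rfl⟩ := Sym2.mem_iff_exists.1 h
  rw [SimpleGraph.mem_edgeSet] at he
  rcases c.hnbr w he with rfl | rfl
  · exact Or.inl rfl
  · exact Or.inr rfl

lemma xy_not_edge : s(c.x, c.y) ∉ c.H.edgeSet :=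
  fun h => c.hnadj ((SimpleGraph.mem_edgeSet _).1 h)

lemma lift_mem {e : Sym2 V} (he : e ∈ c.H.edgeSet) (h : c.u ∉ e) :
    e.map c.pi ∈ c.H'.edgeSet := by
  induction e using Sym2.inductionOn with
  | hf p q =>
    rw [Sym2.map_pair_eq, SimpleGraph.mem_edgeSet, c.H'_adj]
    refine Or.inl ?_
    rw [c.pi_val (fun hp => h (hp ▸ Sym2.mem_mk_left p q)),
      c.pi_val (fun hq => h (hq ▸ Sym2.mem_mk_right p q))]
    exact (SimpleGraph.mem_edgeSet _).1 he

lemma drop_mem {e' : Sym2 c.VS} (he : e' ∈ c.H'.edgeSet) (h : e' ≠ c.fE) :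
    e'.map Subtype.val ∈ c.H.edgeSet := by
  induction e' using Sym2.inductionOn with
  | hf p q =>
    rw [SimpleGraph.mem_edgeSet] at he
    rcases c.H'_adj.1 he with h1 | h1
    · rw [Sym2.map_pair_eq]
      exact (SimpleGraph.mem_edgeSet _).2 h1
    · exact absurd h1 h

open Classical in
noncomputable def liftE : c.H.edgeSet → c.H'.edgeSet := fun e =>
  if h : c.u ∈ (e : Sym2 V) then c.fS
  else ⟨(e : Sym2 V).map c.pi, c.lift_mem e.2 h⟩

noncomputable def m : V ⊕ c.H.edgeSet → c.VS ⊕ c.H'.edgeSet :=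
  Sum.map c.pi c.liftE

open Classical in
noncomputable def m' (eb : c.H.edgeSet) : c.VS ⊕ c.H'.edgeSet → V ⊕ c.H.edgeSet :=
  Sum.map Subtype.val (fun e' =>
    if h : e' = c.fS then eb
    else ⟨(e' : Sym2 c.VS).map Subtype.val,
      c.drop_mem e'.2 (fun hv => h (Subtype.ext hv))⟩)

lemma m_inl (v : V) : c.m (Sum.inl v) = Sum.inl (c.pi v) := rfl
lemma m_inr (e : c.H.edgeSet) : c.m (Sum.inr e) = Sum.inr (c.liftE e) := rfl

lemma liftE_of_u {e : c.H.edgeSet} (h : c.u ∈ (e : Sym2 V)) : c.liftE e = c.fS :=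
  dif_pos h

lemma liftE_of_not_u {e : c.H.edgeSet} (h : c.u ∉ (e : Sym2 V)) :
    (c.liftE e : Sym2 c.VS) = (e : Sym2 V).map c.pi := by
  rw [liftE, dif_neg h]

lemma liftE_ne_fS {e : c.H.edgeSet} (h : c.u ∉ (e : Sym2 V)) : c.liftE e ≠ c.fS := by
  intro hq
  have := congrArg (fun t : c.H'.edgeSet => Sym2.map Subtype.val (t : Sym2 c.VS)) hq
  simp only [c.liftE_of_not_u h] at this
  rw [c.map_val_map_pi h] at this
  have hfv : (c.fS : Sym2 c.VS).map Subtype.val = s(c.x, c.y) := by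
    show (c.fE).map Subtype.val = _
    rw [show c.fE = s(c.xs, c.ys) from rfl, Sym2.map_pair_eq]
    rfl
  rw [hfv] at this
  exact c.xy_not_edge (this ▸ e.2)

lemma m'_inl (eb : c.H.edgeSet) (v : c.VS) : c.m' eb (Sum.inl v) = Sum.inl ↑v := rfl

lemma m'_fS (eb : c.H.edgeSet) : c.m' eb (Sum.inr c.fS) = Sum.inr eb := by
  simp [m', Sum.map]

lemma m'_inr_ne (eb : c.H.edgeSet) {e' : c.H'.edgeSet} (h : e' ≠ c.fS) :
    ∃ he, c.m' eb (Sum.inr e') = Sum.inr ⟨(e' : Sym2 c.VS).map Subtype.val, he⟩ := by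
  refine ⟨c.drop_mem e'.2 (fun hv => h (Subtype.ext hv)), ?_⟩
  simp [m', Sum.map, dif_neg h]

lemma m_m' (eb : c.H.edgeSet) (hb : c.u ∈ (eb : Sym2 V)) (a : c.VS ⊕ c.H'.edgeSet) :
    c.m (c.m' eb a) = a := by
  rcases a with v | e'
  · rw [c.m'_inl, c.m_inl, c.pi_coe]
  · by_cases h : e' = c.fS
    · subst h
      rw [c.m'_fS, c.m_inr, c.liftE_of_u hb]
    · obtain ⟨he, hm⟩ := c.m'_inr_ne eb h
      rw [hm, c.m_inr]
      congr 1
      refine Subtype.ext ?_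
      rw [c.liftE_of_not_u (c.u_not_mem_map_val _)]
      exact c.map_pi_map_val _

/-- The forward map on matchings. -/
noncomputable def Phi (P : Set (Sym2 (V ⊕ c.H.edgeSet))) :
    Set (Sym2 (c.VS ⊕ c.H'.edgeSet)) :=
  (Sym2.map c.m) '' {p ∈ P | Sum.inl c.u ∉ p}

/-- `a` touches the vertex `w`. -/
def tb (w : V) : c.VS ⊕ c.H'.edgeSet → Prop := fun a =>
  match a with
  | Sum.inl v => (v : V) = w
  | Sum.inr e => ∃ cc ∈ (e : Sym2 c.VS), (cc : V) = w

def cond (Q : Set (Sym2 (c.VS ⊕ c.H'.edgeSet))) : Prop :=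
  ∃ a, s(Sum.inr c.fS, a) ∈ Q ∧ c.tb c.y a

def eEdge (z : V) (hz : c.H.Adj c.u z) : c.H.edgeSet := ⟨s(c.u, z), hz⟩

open Classical in
noncomputable def Psi (Q : Set (Sym2 (c.VS ⊕ c.H'.edgeSet))) :
    Set (Sym2 (V ⊕ c.H.edgeSet)) :=
  if c.cond Q then
    insert s(Sum.inl c.u, Sum.inr (c.eEdge c.x c.hux))
      ((Sym2.map (c.m' (c.eEdge c.y c.huy))) '' Q)
  else
    insert s(Sum.inl c.u, Sum.inr (c.eEdge c.y c.huy))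
      ((Sym2.map (c.m' (c.eEdge c.x c.hux))) '' Q)

end Ctx

section Matching

variable {W : Type*} {G : SimpleGraph W} {P : Set (Sym2 W)}

lemma pm_not_diag (hP : IsPerfMatchSet G P) {p : Sym2 W} (hp : p ∈ P) : ¬ p.IsDiag :=
  SimpleGraph.not_isDiag_of_mem_edgeSet G (hP.1 hp)

lemma pm_eq_of_mem (hP : IsPerfMatchSet G P) {p q : Sym2 W} (hp : p ∈ P) (hq : q ∈ P)
    {a : W} (ha : a ∈ p) (hb : a ∈ q) : p = q := by
  by_contra h
  exact hP.2.1 p hp q hq h a ha hb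

lemma pm_pair (hP : IsPerfMatchSet G P) {p : Sym2 W} (hp : p ∈ P) {a : W} (ha : a ∈ p) :
    ∃ b, p = s(a, b) ∧ G.Adj a b := by
  obtain ⟨b, rfl⟩ := Sym2.mem_iff_exists.1 ha
  exact ⟨b, rfl, (SimpleGraph.mem_edgeSet _).1 (hP.1 hp)⟩

end Matching

namespace Ctx

variable {V : Type*} (c : Ctx V)

/-- `z, zb` is an admissible splitting of `{x, y}`. -/
def Pr (z zb : V) : Prop := (z = c.x ∧ zb = c.y) ∨ (z = c.y ∧ zb = c.x)

lemma Pr_adj_z {z zb : V} (h : c.Pr z zb) : c.H.Adj c.u z := by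
  rcases h with ⟨rfl, _⟩ | ⟨rfl, _⟩
  · exact c.hux
  · exact c.huy

lemma Pr_adj_zb {z zb : V} (h : c.Pr z zb) : c.H.Adj c.u zb := by
  rcases h with ⟨_, rfl⟩ | ⟨_, rfl⟩
  · exact c.huy
  · exact c.hux

lemma Pr_ne {z zb : V} (h : c.Pr z zb) : z ≠ zb := by
  rcases h with ⟨rfl, rfl⟩ | ⟨rfl, rfl⟩
  · exact c.hxy
  · exact c.hxy.symm

lemma Pr_z_ne_u {z zb : V} (h : c.Pr z zb) : z ≠ c.u := (c.Pr_adj_z h).ne'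
lemma Pr_zb_ne_u {z zb : V} (h : c.Pr z zb) : zb ≠ c.u := (c.Pr_adj_zb h).ne'

lemma Pr_pi_zb_mem_fE {z zb : V} (h : c.Pr z zb) : c.pi zb ∈ c.fE := by
  rcases h with ⟨_, rfl⟩ | ⟨_, rfl⟩
  · have : c.pi c.y = c.ys := Subtype.ext (c.pi_val c.huy.ne')
    rw [this]
    exact Sym2.mem_mk_right _ _
  · have : c.pi c.x = c.xs := Subtype.ext (c.pi_val c.hux.ne')
    rw [this]
    exact Sym2.mem_mk_left _ _

lemma mg_adj_inl_inr {G : SimpleGraph V} {v : V} {e : G.edgeSet} :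
    (middleGraph G).Adj (Sum.inl v) (Sum.inr e) ↔ v ∈ (e : Sym2 V) := Iff.rfl

lemma mg_adj_inr_inr {G : SimpleGraph V} {e f : G.edgeSet} :
    (middleGraph G).Adj (Sum.inr e) (Sum.inr f) ↔
      e ≠ f ∧ ∃ v, v ∈ (e : Sym2 V) ∧ v ∈ (f : Sym2 V) := Iff.rfl

lemma mg_adj_inl_inl {G : SimpleGraph V} {v w : V} :
    ¬ (middleGraph G).Adj (Sum.inl v) (Sum.inl w) := fun h => h

lemma sym2_rep {α : Type*} (z : Sym2 α) : ∃ a b, z = s(a, b) :=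
  Sym2.inductionOn z (fun a b => ⟨a, b, rfl⟩)

section A

variable {V : Type*} (c : Ctx V) {z zb : V} {e : c.H.edgeSet}

lemma Pr_other (hpr : c.Pr z zb) {ev : Sym2 V} (he : ev ∈ c.H.edgeSet)
    (hu : c.u ∈ ev) (hne : ev ≠ s(c.u, z)) : ev = s(c.u, zb) := by
  rcases c.edge_with_u he hu with h | h <;>
    rcases hpr with ⟨rfl, rfl⟩ | ⟨rfl, rfl⟩ <;> first | exact h | exact absurd h hne

lemma liftE_inj (hpr : c.Pr z zb) (hev : (e : Sym2 V) = s(c.u, z))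
    {g1 g2 : c.H.edgeSet} (h1 : g1 ≠ e) (h2 : g2 ≠ e)
    (h : c.liftE g1 = c.liftE g2) : g1 = g2 := by
  by_cases hu1 : c.u ∈ (g1 : Sym2 V) <;> by_cases hu2 : c.u ∈ (g2 : Sym2 V)
  · refine Subtype.ext ?_
    rw [c.Pr_other hpr g1.2 hu1 (fun hh => h1 (Subtype.ext (hh.trans hev.symm))),
      c.Pr_other hpr g2.2 hu2 (fun hh => h2 (Subtype.ext (hh.trans hev.symm)))]
  · rw [c.liftE_of_u hu1] at h
    exact absurd h.symm (c.liftE_ne_fS hu2)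
  · rw [c.liftE_of_u hu2] at h
    exact absurd h (c.liftE_ne_fS hu1)
  · have hval := congrArg (fun t : c.H'.edgeSet => (t : Sym2 c.VS)) h
    rw [c.liftE_of_not_u hu1, c.liftE_of_not_u hu2] at hval
    have := congrArg (Sym2.map (Subtype.val)) hval
    rw [c.map_val_map_pi hu1, c.map_val_map_pi hu2] at this
    exact Subtype.ext this

lemma m_inj (hpr : c.Pr z zb) (hev : (e : Sym2 V) = s(c.u, z))
    {a b : V ⊕ c.H.edgeSet}
    (ha1 : a ≠ Sum.inl c.u) (ha2 : a ≠ Sum.inr e)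
    (hb1 : b ≠ Sum.inl c.u) (hb2 : b ≠ Sum.inr e)
    (h : c.m a = c.m b) : a = b := by
  rcases a with v | g1 <;> rcases b with w | g2
  · rw [c.m_inl, c.m_inl] at h
    have := c.pi_val (fun hh : v = c.u => ha1 (by rw [hh]))
    have h2 := c.pi_val (fun hh : w = c.u => hb1 (by rw [hh]))
    have := congrArg (fun t : c.VS ⊕ c.H'.edgeSet =>
      Sum.elim (Subtype.val) (fun _ => c.u) t) h
    simp only [Sum.elim_inl] at this
    rw [c.pi_val (fun hh : v = c.u => ha1 (by rw [hh])),
      c.pi_val (fun hh : w = c.u => hb1 (by rw [hh]))] at this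
    rw [this]
  · exact absurd h (by rw [c.m_inl, c.m_inr]; exact fun hh => nomatch hh)
  · exact absurd h (by rw [c.m_inl, c.m_inr]; exact fun hh => nomatch hh)
  · rw [c.m_inr, c.m_inr] at h
    rw [c.liftE_inj hpr hev (fun hh => ha2 (by rw [hh])) (fun hh => hb2 (by rw [hh]))
      (Sum.inr.inj h)]

lemma pi_mem_liftE (hpr : c.Pr z zb) (hev : (e : Sym2 V) = s(c.u, z))
    {g : c.H.edgeSet} {v : V} (hg : g ≠ e) (hv : v ∈ (g : Sym2 V)) (hvu : v ≠ c.u) :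
    c.pi v ∈ (c.liftE g : Sym2 c.VS) := by
  by_cases hu : c.u ∈ (g : Sym2 V)
  · have hgv : (g : Sym2 V) = s(c.u, zb) :=
      c.Pr_other hpr g.2 hu (fun hh => hg (Subtype.ext (hh.trans hev.symm)))
    have hvzb : v = zb := by
      rw [hgv] at hv
      rcases Sym2.mem_iff.1 hv with h | h
      · exact absurd h hvu
      · exact h
    rw [c.liftE_of_u hu]
    subst hvzb
    exact c.Pr_pi_zb_mem_fE hpr
  · rw [c.liftE_of_not_u hu]
    exact Sym2.mem_map.2 ⟨v, hv, rfl⟩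

lemma adj_map (hpr : c.Pr z zb) (hev : (e : Sym2 V) = s(c.u, z))
    {a b : V ⊕ c.H.edgeSet} (hadj : (middleGraph c.H).Adj a b)
    (ha1 : a ≠ Sum.inl c.u) (ha2 : a ≠ Sum.inr e)
    (hb1 : b ≠ Sum.inl c.u) (hb2 : b ≠ Sum.inr e) :
    (middleGraph c.H').Adj (c.m a) (c.m b) := by
  rcases a with v | g1 <;> rcases b with w | g2
  · exact absurd hadj (mg_adj_inl_inl)
  · rw [c.m_inl, c.m_inr, mg_adj_inl_inr]
    exact c.pi_mem_liftE hpr hev (fun hh => hb2 (by rw [hh]))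
      (mg_adj_inl_inr.1 hadj) (fun hh => ha1 (by rw [hh]))
  · refine SimpleGraph.Adj.symm ?_
    rw [c.m_inl, c.m_inr, mg_adj_inl_inr]
    exact c.pi_mem_liftE hpr hev (fun hh => ha2 (by rw [hh]))
      (mg_adj_inl_inr.1 (hadj.symm)) (fun hh => hb1 (by rw [hh]))
  · rw [c.m_inr, c.m_inr, mg_adj_inr_inr]
    obtain ⟨hne, v, hv1, hv2⟩ := mg_adj_inr_inr.1 hadj
    have hg1 : g1 ≠ e := fun hh => ha2 (by rw [hh])
    have hg2 : g2 ≠ e := fun hh => hb2 (by rw [hh])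
    have hvu : v ≠ c.u := by
      rintro rfl
      exact hne (Subtype.ext (((c.Pr_other hpr g1.2 hv1
        (fun hh => hg1 (Subtype.ext (hh.trans hev.symm)))).trans
        (c.Pr_other hpr g2.2 hv2
          (fun hh => hg2 (Subtype.ext (hh.trans hev.symm)))).symm)))
    exact ⟨fun hh => hne (c.liftE_inj hpr hev hg1 hg2 hh),
      c.pi v, c.pi_mem_liftE hpr hev hg1 hv1 hvu, c.pi_mem_liftE hpr hev hg2 hv2 hvu⟩

lemma mem_ok (hP : IsPerfMatchSet (middleGraph c.H) P)
    (hup : s(Sum.inl c.u, Sum.inr e) ∈ P) {p : Sym2 (V ⊕ c.H.edgeSet)}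
    (hp : p ∈ P) (hpu : Sum.inl c.u ∉ p) {a : V ⊕ c.H.edgeSet} (ha : a ∈ p) :
    a ≠ Sum.inl c.u ∧ a ≠ Sum.inr e := by
  constructor
  · rintro rfl
    exact hpu ha
  · rintro rfl
    have hpe : p = s(Sum.inl c.u, Sum.inr e) :=
      pm_eq_of_mem hP hp hup ha (Sym2.mem_mk_right _ _)
    exact hpu (hpe ▸ Sym2.mem_mk_left _ _)

lemma phi_matching (hP : IsPerfMatchSet (middleGraph c.H) P) (hpr : c.Pr z zb)
    {eb : c.H.edgeSet}
    (hev : (e : Sym2 V) = s(c.u, z)) (hebv : (eb : Sym2 V) = s(c.u, zb))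
    (hup : s(Sum.inl c.u, Sum.inr e) ∈ P) :
    IsPerfMatchSet (middleGraph c.H') (c.Phi P) := by
  refine ⟨?_, ?_, ?_⟩
  · rintro q ⟨p, ⟨hpP, hpu⟩, rfl⟩
    obtain ⟨a, b, rfl⟩ := sym2_rep p
    have hadj := (SimpleGraph.mem_edgeSet _).1 (hP.1 hpP)
    have oa := c.mem_ok hP hup hpP hpu (Sym2.mem_mk_left a b)
    have ob := c.mem_ok hP hup hpP hpu (Sym2.mem_mk_right a b)
    rw [Sym2.map_pair_eq]
    exact (SimpleGraph.mem_edgeSet _).2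
      (c.adj_map hpr hev hadj oa.1 oa.2 ob.1 ob.2)
  · rintro q1 ⟨p1, ⟨hp1, hu1⟩, rfl⟩ q2 ⟨p2, ⟨hp2, hu2⟩, rfl⟩ hne a ha1 ha2
    rw [Sym2.mem_map] at ha1 ha2
    obtain ⟨a1, ha1m, rfl⟩ := ha1
    obtain ⟨a2, ha2m, heq⟩ := ha2
    have o1 := c.mem_ok hP hup hp1 hu1 ha1m
    have o2 := c.mem_ok hP hup hp2 hu2 ha2m
    have ha12 : a2 = a1 := c.m_inj hpr hev o2.1 o2.2 o1.1 o1.2 heq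
    subst ha12
    exact hne (by rw [pm_eq_of_mem hP hp1 hp2 ha1m ha2m])
  · rintro (v | e')
    · obtain ⟨p, hp, hvp⟩ := hP.2.2 (Sum.inl (v : V))
      have hpu : Sum.inl c.u ∉ p := by
        intro hu
        rw [pm_eq_of_mem hP hp hup hu (Sym2.mem_mk_left _ _), Sym2.mem_iff] at hvp
        rcases hvp with h | h
        · exact v.2 (Sum.inl.inj h)
        · exact nomatch h
      refine ⟨Sym2.map c.m p, ⟨p, ⟨hp, hpu⟩, rfl⟩, ?_⟩
      exact Sym2.mem_map.2 ⟨_, hvp, by rw [c.m_inl, c.pi_coe]⟩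
    · by_cases hf : e' = c.fS
      · subst hf
        obtain ⟨p, hp, hvp⟩ := hP.2.2 (Sum.inr eb)
        have hpu : Sum.inl c.u ∉ p := by
          intro hu
          rw [pm_eq_of_mem hP hp hup hu (Sym2.mem_mk_left _ _), Sym2.mem_iff] at hvp
          rcases hvp with h | h
          · exact nomatch h
          · have : (eb : Sym2 V) = (e : Sym2 V) := congrArg _ (Sum.inr.inj h)
            rw [hev, hebv] at this
            exact (c.Pr_ne hpr) (Sym2.congr_right.1 this).symm
        refine ⟨Sym2.map c.m p, ⟨p, ⟨hp, hpu⟩, rfl⟩, ?_⟩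
        refine Sym2.mem_map.2 ⟨_, hvp, ?_⟩
        rw [c.m_inr, c.liftE_of_u (hebv ▸ Sym2.mem_mk_left _ _)]
      · have hg : (e' : Sym2 c.VS).map Subtype.val ∈ c.H.edgeSet :=
          c.drop_mem e'.2 (fun hv => hf (Subtype.ext hv))
        set g : c.H.edgeSet := ⟨(e' : Sym2 c.VS).map Subtype.val, hg⟩ with hgdef
        have hgu : c.u ∉ (g : Sym2 V) := c.u_not_mem_map_val _
        obtain ⟨p, hp, hvp⟩ := hP.2.2 (Sum.inr g)
        have hpu : Sum.inl c.u ∉ p := by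
          intro hu
          rw [pm_eq_of_mem hP hp hup hu (Sym2.mem_mk_left _ _), Sym2.mem_iff] at hvp
          rcases hvp with h | h
          · exact nomatch h
          · have : (g : Sym2 V) = (e : Sym2 V) := congrArg _ (Sum.inr.inj h)
            rw [hev] at this
            exact hgu (this ▸ Sym2.mem_mk_left _ _)
        refine ⟨Sym2.map c.m p, ⟨p, ⟨hp, hpu⟩, rfl⟩, ?_⟩
        refine Sym2.mem_map.2 ⟨_, hvp, ?_⟩
        rw [c.m_inr]
        congr 1
        refine Subtype.ext ?_
        rw [c.liftE_of_not_u hgu]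
        exact c.map_pi_map_val _

lemma phi_touch (hP : IsPerfMatchSet (middleGraph c.H) P) (hpr : c.Pr z zb)
    {eb : c.H.edgeSet}
    (hev : (e : Sym2 V) = s(c.u, z)) (hebv : (eb : Sym2 V) = s(c.u, zb))
    (hup : s(Sum.inl c.u, Sum.inr e) ∈ P)
    {a : c.VS ⊕ c.H'.edgeSet} (hq : s(Sum.inr c.fS, a) ∈ c.Phi P) :
    c.tb zb a := by
  obtain ⟨p, ⟨hp, hpu⟩, hmap⟩ := hq
  have hfm : Sum.inr c.fS ∈ Sym2.map c.m p := hmap ▸ Sym2.mem_mk_left _ _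
  obtain ⟨a1, ha1, hma1⟩ := Sym2.mem_map.1 hfm
  rcases a1 with v | g
  · exact absurd hma1 (by rw [c.m_inl]; exact fun hh => nomatch hh)
  · rw [c.m_inr] at hma1
    have hlg : c.liftE g = c.fS := Sum.inr.inj hma1
    have hok := c.mem_ok hP hup hp hpu ha1
    have hug : c.u ∈ (g : Sym2 V) := by
      by_contra hng
      exact c.liftE_ne_fS hng hlg
    have hgval : (g : Sym2 V) = s(c.u, zb) :=
      c.Pr_other hpr g.2 hug (fun hh => hok.2 (by
        rw [show g = e from Subtype.ext (hh.trans hev.symm)]))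
    obtain ⟨b1, hpb, hadj⟩ := pm_pair hP hp ha1
    have hms : Sym2.map c.m p = s(Sum.inr c.fS, c.m b1) := by
      rw [hpb, Sym2.map_pair_eq, c.m_inr, hlg]
    have hab : a = c.m b1 := Sym2.congr_right.1 (hmap.symm.trans hms)
    have hb1 : b1 ∈ p := hpb ▸ Sym2.mem_mk_right _ _
    have okB := c.mem_ok hP hup hp hpu hb1
    subst hab
    rcases b1 with v | g2
    · have hv : (v : V) ∈ (g : Sym2 V) := hadj.symm
      rw [hgval, Sym2.mem_iff] at hv
      have hvzb : v = zb := by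
        rcases hv with h | h
        · exact absurd (by rw [h]) okB.1
        · exact h
      rw [c.m_inl]
      exact (c.pi_val (fun hh : v = c.u => okB.1 (by rw [hh]))).trans hvzb
    · obtain ⟨hne2, w, hw1, hw2⟩ := mg_adj_inr_inr.1 hadj
      have hg2e : g2 ≠ e := fun hh => okB.2 (by rw [hh])
      have hwu : w ≠ c.u := by
        rintro rfl
        exact hne2 (Subtype.ext ((hgval.trans
          (c.Pr_other hpr g2.2 hw2 (fun hh => hg2e (Subtype.ext (hh.trans hev.symm)))).symm)))
      have hwzb : w = zb := by
        rw [hgval, Sym2.mem_iff] at hw1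
        rcases hw1 with h | h
        · exact absurd h hwu
        · exact h
      rw [c.m_inr]
      refine ⟨c.pi w, c.pi_mem_liftE hpr hev hg2e hw2 hwu, (c.pi_val hwu).trans hwzb⟩

lemma phi_touch_exists (hP : IsPerfMatchSet (middleGraph c.H) P) (hpr : c.Pr z zb)
    {eb : c.H.edgeSet}
    (hev : (e : Sym2 V) = s(c.u, z)) (hebv : (eb : Sym2 V) = s(c.u, zb))
    (hup : s(Sum.inl c.u, Sum.inr e) ∈ P) :
    ∃ a, s(Sum.inr c.fS, a) ∈ c.Phi P ∧ c.tb zb a := by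
  have hPhi := c.phi_matching hP hpr hev hebv hup
  obtain ⟨q, hq, hfq⟩ := hPhi.2.2 (Sum.inr c.fS)
  obtain ⟨a, rfl, _⟩ := pm_pair hPhi hq hfq
  exact ⟨a, hq, c.phi_touch hP hpr hev hebv hup hq⟩

lemma cond_phi (hP : IsPerfMatchSet (middleGraph c.H) P) (hpr : c.Pr z zb)
    {eb : c.H.edgeSet}
    (hev : (e : Sym2 V) = s(c.u, z)) (hebv : (eb : Sym2 V) = s(c.u, zb))
    (hup : s(Sum.inl c.u, Sum.inr e) ∈ P) :
    c.cond (c.Phi P) ↔ zb = c.y := by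
  constructor
  · intro ⟨a, hqa, hty⟩
    have htzb := c.phi_touch hP hpr hev hebv hup hqa
    by_contra hzb
    have hzbx : zb = c.x := by
      rcases hpr with ⟨_, h⟩ | ⟨_, h⟩
      · exact absurd h hzb
      · exact h
    rcases a with v | g'
    · exact c.hxy ((hzbx ▸ htzb : (v : V) = c.x).symm.trans hty)
    · obtain ⟨c1, hc1, hc1v⟩ := htzb
      obtain ⟨c2, hc2, hc2v⟩ := hty
      have hc1x : c1 = c.xs := Subtype.ext (hc1v.trans hzbx)
      have hc2y : c2 = c.ys := Subtype.ext hc2v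
      subst hc1x; subst hc2y
      have hgval : (g' : Sym2 c.VS) = c.fE := sym2_eq_of_two_mem hc1 hc2 c.xs_ne_ys
      have hgf : g' = c.fS := Subtype.ext hgval
      subst hgf
      have hPhi := c.phi_matching hP hpr hev hebv hup
      exact pm_not_diag hPhi hqa (Sym2.mk_isDiag_iff.2 rfl)
  · intro hzb
    obtain ⟨a, hq, ht⟩ := c.phi_touch_exists hP hpr hev hebv hup
    exact ⟨a, hq, hzb ▸ ht⟩

lemma psi_eq_aux (hP : IsPerfMatchSet (middleGraph c.H) P) (hpr : c.Pr z zb)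
    {eb : c.H.edgeSet}
    (hev : (e : Sym2 V) = s(c.u, z)) (hebv : (eb : Sym2 V) = s(c.u, zb))
    (hup : s(Sum.inl c.u, Sum.inr e) ∈ P) :
    insert s(Sum.inl c.u, Sum.inr e) ((Sym2.map (c.m' eb)) '' (c.Phi P)) = P := by
  have key : ∀ p ∈ P, Sum.inl c.u ∉ p →
      Sym2.map (c.m' eb) (Sym2.map c.m p) = p := by
    intro p hp hpu
    rw [Sym2.map_map]
    refine sym2_map_eq_self (fun a ha => ?_)
    have hok := c.mem_ok hP hup hp hpu ha
    rcases a with v | g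
    · show c.m' eb (c.m (Sum.inl v)) = _
      rw [c.m_inl, c.m'_inl, c.pi_val (fun hh : v = c.u => hok.1 (by rw [hh]))]
    · show c.m' eb (c.m (Sum.inr g)) = _
      by_cases hug : c.u ∈ (g : Sym2 V)
      · have hgeb : g = eb := Subtype.ext (by
          rw [hebv]
          exact c.Pr_other hpr g.2 hug
            (fun hh => hok.2 (by rw [show g = e from Subtype.ext (hh.trans hev.symm)])))
        rw [c.m_inr, c.liftE_of_u hug, c.m'_fS, hgeb]
      · rw [c.m_inr]
        obtain ⟨he2, hm2⟩ := c.m'_inr_ne eb (c.liftE_ne_fS hug)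
        rw [hm2]
        congr 1
        refine Subtype.ext ?_
        show (c.liftE g : Sym2 c.VS).map Subtype.val = (g : Sym2 V)
        rw [c.liftE_of_not_u hug, c.map_val_map_pi hug]
  have himg : (Sym2.map (c.m' eb)) '' (c.Phi P) = {p ∈ P | Sum.inl c.u ∉ p} := by
    rw [Phi, Set.image_image]
    ext p
    constructor
    · rintro ⟨p0, ⟨hp0, hp0u⟩, rfl⟩
      simp only [key p0 hp0 hp0u]
      exact ⟨hp0, hp0u⟩
    · rintro ⟨hp, hpu⟩
      exact ⟨p, ⟨hp, hpu⟩, key p hp hpu⟩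
  rw [himg]
  ext p
  simp only [Set.mem_insert_iff, Set.mem_setOf_eq]
  constructor
  · rintro (rfl | ⟨hp, _⟩)
    · exact hup
    · exact hp
  · intro hp
    by_cases hpu : Sum.inl c.u ∈ p
    · exact Or.inl (pm_eq_of_mem hP hp hup hpu (Sym2.mem_mk_left _ _))
    · exact Or.inr ⟨hp, hpu⟩

lemma fE_map_val : (c.fE).map Subtype.val = s(c.x, c.y) := by
  rw [show c.fE = s(c.xs, c.ys) from rfl, Sym2.map_pair_eq]
  rfl

lemma m'_inj {eb : c.H.edgeSet} (hub : c.u ∈ (eb : Sym2 V)) :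
    Function.Injective (c.m' eb) :=
  Function.LeftInverse.injective (c.m_m' eb hub)

variable {Q : Set (Sym2 (c.VS ⊕ c.H'.edgeSet))}

lemma m'_ne_inl_u {eb : c.H.edgeSet} (a : c.VS ⊕ c.H'.edgeSet) :
    c.m' eb a ≠ Sum.inl c.u := by
  rcases a with v | e'
  · rw [c.m'_inl]
    exact fun hh => v.2 (Sum.inl.inj hh)
  · by_cases hf : e' = c.fS
    · subst hf
      rw [c.m'_fS]
      exact fun hh => nomatch hh
    · obtain ⟨he2, hm2⟩ := c.m'_inr_ne eb hf
      rw [hm2]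
      exact fun hh => nomatch hh

lemma m'_ne_inr_e (hpr : c.Pr z zb) {eb : c.H.edgeSet}
    (hev : (e : Sym2 V) = s(c.u, z)) (hebv : (eb : Sym2 V) = s(c.u, zb))
    (a : c.VS ⊕ c.H'.edgeSet) : c.m' eb a ≠ Sum.inr e := by
  rcases a with v | e'
  · rw [c.m'_inl]
    exact fun hh => nomatch hh
  · by_cases hf : e' = c.fS
    · subst hf
      rw [c.m'_fS]
      intro hh
      have : (eb : Sym2 V) = (e : Sym2 V) := congrArg _ (Sum.inr.inj hh)
      rw [hev, hebv] at this
      exact (c.Pr_ne hpr) (Sym2.congr_right.1 this).symm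
    · obtain ⟨he2, hm2⟩ := c.m'_inr_ne eb hf
      rw [hm2]
      intro hh
      have : (e' : Sym2 c.VS).map Subtype.val = (e : Sym2 V) :=
        congrArg Subtype.val (Sum.inr.inj hh)
      exact c.u_not_mem_map_val e' (this ▸ (hev ▸ Sym2.mem_mk_left _ _))

lemma psi_pair_adj (hQ : IsPerfMatchSet (middleGraph c.H') Q) (hpr : c.Pr z zb)
    {eb : c.H.edgeSet} (hebv : (eb : Sym2 V) = s(c.u, zb))
    (htouch : ∀ a, s(Sum.inr c.fS, a) ∈ Q → c.tb zb a)
    {a b : c.VS ⊕ c.H'.edgeSet} (hqmem : s(a, b) ∈ Q) :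
    (middleGraph c.H).Adj (c.m' eb a) (c.m' eb b) := by
  have hub : c.u ∈ (eb : Sym2 V) := hebv ▸ Sym2.mem_mk_left _ _
  have hadj := (SimpleGraph.mem_edgeSet _).1 (hQ.1 hqmem)
  have key : ∀ a b : c.VS ⊕ c.H'.edgeSet, s(a, b) ∈ Q →
      (middleGraph c.H').Adj a b →
      (∀ v' : c.VS, ∀ e2 : c.H'.edgeSet, a = Sum.inl v' → b = Sum.inr e2 → True) →
      True := fun _ _ _ _ _ => trivial
  clear key
  rcases a with v' | e2 <;> rcases b with w' | e3
  · exact absurd hadj (mg_adj_inl_inl)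
  · -- inl v', inr e3
    by_cases hf : e3 = c.fS
    · subst hf
      have ht := htouch (Sum.inl v') (Sym2.eq_swap ▸ hqmem)
      have hvzb : (v' : V) = zb := ht
      rw [c.m'_inl, c.m'_fS, mg_adj_inl_inr, hvzb, hebv]
      exact Sym2.mem_mk_right _ _
    · obtain ⟨he2, hm2⟩ := c.m'_inr_ne eb hf
      rw [c.m'_inl, hm2, mg_adj_inl_inr]
      exact Sym2.mem_map.2 ⟨v', mg_adj_inl_inr.1 hadj, rfl⟩
  · -- inr e2, inl w'
    refine SimpleGraph.Adj.symm ?_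
    by_cases hf : e2 = c.fS
    · subst hf
      have ht := htouch (Sum.inl w') hqmem
      have hvzb : (w' : V) = zb := ht
      rw [c.m'_inl, c.m'_fS, mg_adj_inl_inr, hvzb, hebv]
      exact Sym2.mem_mk_right _ _
    · obtain ⟨he2, hm2⟩ := c.m'_inr_ne eb hf
      rw [c.m'_inl, hm2, mg_adj_inl_inr]
      exact Sym2.mem_map.2 ⟨w', mg_adj_inl_inr.1 hadj.symm, rfl⟩
  · -- inr e2, inr e3
    obtain ⟨hne, w', hw2, hw3⟩ := mg_adj_inr_inr.1 hadj
    have hinj : c.m' eb (Sum.inr e2) ≠ c.m' eb (Sum.inr e3) :=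
      fun hh => hne (Sum.inr.inj (c.m'_inj hub hh))
    by_cases hf2 : e2 = c.fS
    · subst hf2
      have ht := htouch (Sum.inr e3) hqmem
      obtain ⟨cc, hcc, hccv⟩ := ht
      have hf3 : e3 ≠ c.fS := fun hh => hne hh.symm
      obtain ⟨he3, hm3⟩ := c.m'_inr_ne eb hf3
      rw [c.m'_fS, hm3] at hinj ⊢
      rw [mg_adj_inr_inr]
      refine ⟨fun hh => hinj (by rw [hh]), zb, hebv ▸ Sym2.mem_mk_right _ _, ?_⟩
      exact hccv ▸ Sym2.mem_map.2 ⟨cc, hcc, rfl⟩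
    · by_cases hf3 : e3 = c.fS
      · subst hf3
        have ht := htouch (Sum.inr e2) (Sym2.eq_swap ▸ hqmem)
        obtain ⟨cc, hcc, hccv⟩ := ht
        obtain ⟨he2m, hm2⟩ := c.m'_inr_ne eb hf2
        rw [c.m'_fS, hm2] at hinj ⊢
        rw [mg_adj_inr_inr]
        refine ⟨fun hh => hinj (by rw [hh]), zb, ?_, hebv ▸ Sym2.mem_mk_right _ _⟩
        exact hccv ▸ Sym2.mem_map.2 ⟨cc, hcc, rfl⟩
      · obtain ⟨he2m, hm2⟩ := c.m'_inr_ne eb hf2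
        obtain ⟨he3m, hm3⟩ := c.m'_inr_ne eb hf3
        rw [hm2, hm3] at hinj ⊢
        rw [mg_adj_inr_inr]
        exact ⟨fun hh => hinj (by rw [hh]), (w' : V),
          Sym2.mem_map.2 ⟨w', hw2, rfl⟩, Sym2.mem_map.2 ⟨w', hw3, rfl⟩⟩

lemma psi_matching (hQ : IsPerfMatchSet (middleGraph c.H') Q) (hpr : c.Pr z zb)
    {eb : c.H.edgeSet}
    (hev : (e : Sym2 V) = s(c.u, z)) (hebv : (eb : Sym2 V) = s(c.u, zb))
    (htouch : ∀ a, s(Sum.inr c.fS, a) ∈ Q → c.tb zb a) :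
    IsPerfMatchSet (middleGraph c.H)
      (insert s(Sum.inl c.u, Sum.inr e) ((Sym2.map (c.m' eb)) '' Q)) := by
  have hub : c.u ∈ (eb : Sym2 V) := hebv ▸ Sym2.mem_mk_left _ _
  have hue : c.u ∈ (e : Sym2 V) := hev ▸ Sym2.mem_mk_left _ _
  have hupair_mem : ∀ a, a ∈ s(Sum.inl c.u, Sum.inr e) →
      a = Sum.inl c.u ∨ a = Sum.inr e := fun a ha => Sym2.mem_iff.1 ha
  have himg_not : ∀ q ∈ Q, ∀ a ∈ Sym2.map (c.m' eb) q,
      a ≠ Sum.inl c.u ∧ a ≠ Sum.inr e := by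
    intro q hq a ha
    obtain ⟨a0, ha0, rfl⟩ := Sym2.mem_map.1 ha
    exact ⟨c.m'_ne_inl_u a0, c.m'_ne_inr_e hpr hev hebv a0⟩
  refine ⟨?_, ?_, ?_⟩
  · rintro p (rfl | ⟨q, hq, rfl⟩)
    · exact (SimpleGraph.mem_edgeSet _).2 hue
    · obtain ⟨a, b, rfl⟩ := sym2_rep q
      rw [Sym2.map_pair_eq]
      exact (SimpleGraph.mem_edgeSet _).2 (c.psi_pair_adj hQ hpr hebv htouch hq)
  · rintro p (rfl | ⟨q1, hq1, rfl⟩) p2 (rfl | ⟨q2, hq2, rfl⟩) hne a ha1 ha2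
    · exact hne rfl
    · rcases hupair_mem a ha1 with rfl | rfl
      · exact (himg_not q2 hq2 _ ha2).1 rfl
      · exact (himg_not q2 hq2 _ ha2).2 rfl
    · rcases hupair_mem a ha2 with rfl | rfl
      · exact (himg_not q1 hq1 _ ha1).1 rfl
      · exact (himg_not q1 hq1 _ ha1).2 rfl
    · obtain ⟨a1, ha1m, rfl⟩ := Sym2.mem_map.1 ha1
      obtain ⟨a2, ha2m, heq⟩ := Sym2.mem_map.1 ha2
      have : a2 = a1 := c.m'_inj hub heq
      subst this
      exact hne (by rw [pm_eq_of_mem hQ hq1 hq2 ha1m ha2m])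
  · rintro (v | g)
    · by_cases hv : v = c.u
      · subst hv
        exact ⟨_, Set.mem_insert _ _, Sym2.mem_mk_left _ _⟩
      · obtain ⟨q, hq, hvq⟩ := hQ.2.2 (Sum.inl ⟨v, hv⟩)
        refine ⟨Sym2.map (c.m' eb) q, Set.mem_insert_iff.2 (Or.inr ⟨q, hq, rfl⟩), ?_⟩
        exact Sym2.mem_map.2 ⟨Sum.inl ⟨v, hv⟩, hvq, rfl⟩
    · by_cases hgu : c.u ∈ (g : Sym2 V)
      · have hval := c.edge_with_u g.2 hgu
        have hge : g = e ∨ g = eb := by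
          rcases hval with h | h <;> rcases hpr with ⟨rfl, rfl⟩ | ⟨rfl, rfl⟩
          · exact Or.inl (Subtype.ext (h.trans hev.symm))
          · exact Or.inr (Subtype.ext (h.trans hebv.symm))
          · exact Or.inr (Subtype.ext (h.trans hebv.symm))
          · exact Or.inl (Subtype.ext (h.trans hev.symm))
        rcases hge with rfl | rfl
        · exact ⟨_, Set.mem_insert _ _, Sym2.mem_mk_right _ _⟩
        · obtain ⟨q, hq, hvq⟩ := hQ.2.2 (Sum.inr c.fS)
          refine ⟨Sym2.map (c.m' g) q, Set.mem_insert_iff.2 (Or.inr ⟨q, hq, rfl⟩), ?_⟩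
          exact Sym2.mem_map.2 ⟨Sum.inr c.fS, hvq, c.m'_fS g⟩
      · have hlm : (g : Sym2 V).map c.pi ∈ c.H'.edgeSet := c.lift_mem g.2 hgu
        set e' : c.H'.edgeSet := ⟨(g : Sym2 V).map c.pi, hlm⟩ with he'def
        have hf : e' ≠ c.fS := by
          intro hh
          have : ((g : Sym2 V).map c.pi).map Subtype.val = (c.fE).map Subtype.val := by
            rw [show (g : Sym2 V).map c.pi = (e' : Sym2 c.VS) from rfl, hh]
            rfl
          rw [c.map_val_map_pi hgu, c.fE_map_val] at this
          exact c.xy_not_edge (this ▸ g.2)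
        obtain ⟨q, hq, hvq⟩ := hQ.2.2 (Sum.inr e')
        refine ⟨Sym2.map (c.m' eb) q, Set.mem_insert_iff.2 (Or.inr ⟨q, hq, rfl⟩), ?_⟩
        refine Sym2.mem_map.2 ⟨Sum.inr e', hvq, ?_⟩
        obtain ⟨hem, hm⟩ := c.m'_inr_ne eb hf
        rw [hm]
        congr 1
        refine Subtype.ext ?_
        show ((g : Sym2 V).map c.pi).map Subtype.val = (g : Sym2 V)
        exact c.map_val_map_pi hgu

lemma phi_psi_aux (ez ezb : c.H.edgeSet) (hub : c.u ∈ (ezb : Sym2 V))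
    (Q : Set (Sym2 (c.VS ⊕ c.H'.edgeSet))) :
    c.Phi (insert s(Sum.inl c.u, Sum.inr ez) ((Sym2.map (c.m' ezb)) '' Q)) = Q := by
  have key : ∀ q : Sym2 (c.VS ⊕ c.H'.edgeSet),
      Sym2.map c.m (Sym2.map (c.m' ezb) q) = q := by
    intro q
    rw [Sym2.map_map]
    exact sym2_map_eq_self (fun a _ => c.m_m' ezb hub a)
  have hfilter : {p ∈ insert s(Sum.inl c.u, Sum.inr ez) ((Sym2.map (c.m' ezb)) '' Q) |
      Sum.inl c.u ∉ p} = (Sym2.map (c.m' ezb)) '' Q := by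
    ext p
    constructor
    · rintro ⟨hp, hpu⟩
      rcases hp with rfl | hp
      · exact absurd (Sym2.mem_mk_left _ _) hpu
      · exact hp
    · intro hp
      refine ⟨Set.mem_insert_iff.2 (Or.inr hp), ?_⟩
      obtain ⟨q, hq, rfl⟩ := hp
      intro hu
      obtain ⟨a0, _, ha0⟩ := Sym2.mem_map.1 hu
      exact c.m'_ne_inl_u a0 ha0
  rw [Phi, hfilter, Set.image_image]
  ext q
  constructor
  · rintro ⟨q0, hq0, rfl⟩
    simp only [key q0]
    exact hq0
  · intro hq
    exact ⟨q, hq, key q⟩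

lemma exists_upair {P : Set (Sym2 (V ⊕ c.H.edgeSet))}
    (hP : IsPerfMatchSet (middleGraph c.H) P) :
    ∃ (z zb : V) (e eb : c.H.edgeSet), c.Pr z zb ∧ (e : Sym2 V) = s(c.u, z) ∧
      (eb : Sym2 V) = s(c.u, zb) ∧ s(Sum.inl c.u, Sum.inr e) ∈ P := by
  obtain ⟨p, hp, hup⟩ := hP.2.2 (Sum.inl c.u)
  obtain ⟨b, rfl, hadj⟩ := pm_pair hP hp hup
  rcases b with w | g
  · exact absurd hadj mg_adj_inl_inl
  · have hug : c.u ∈ (g : Sym2 V) := hadj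
    rcases c.edge_with_u g.2 hug with h | h
    · exact ⟨c.x, c.y, g, ⟨s(c.u, c.y), c.huy⟩, Or.inl ⟨rfl, rfl⟩, h, rfl, hp⟩
    · exact ⟨c.y, c.x, g, ⟨s(c.u, c.x), c.hux⟩, Or.inr ⟨rfl, rfl⟩, h, rfl, hp⟩

lemma phi_keeps {P : Set (Sym2 (V ⊕ c.H.edgeSet))}
    (hP : IsPerfMatchSet (middleGraph c.H) P) :
    IsPerfMatchSet (middleGraph c.H') (c.Phi P) := by
  obtain ⟨z, zb, e, eb, hpr, hev, hebv, hup⟩ := c.exists_upair hP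
  exact c.phi_matching hP hpr hev hebv hup

lemma cond_touch (hQ : IsPerfMatchSet (middleGraph c.H') Q) (hc : c.cond Q) :
    ∀ a, s(Sum.inr c.fS, a) ∈ Q → c.tb c.y a := by
  obtain ⟨a0, hq0, ht0⟩ := hc
  intro a hqa
  have : s(Sum.inr c.fS, a) = s(Sum.inr c.fS, a0) :=
    pm_eq_of_mem hQ hqa hq0 (Sym2.mem_mk_left _ _) (Sym2.mem_mk_left _ _)
  rw [Sym2.congr_right.1 this]
  exact ht0

lemma not_cond_touch (hQ : IsPerfMatchSet (middleGraph c.H') Q) (hnc : ¬ c.cond Q) :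
    ∀ a, s(Sum.inr c.fS, a) ∈ Q → c.tb c.x a := by
  intro a hqa
  have hadj := (SimpleGraph.mem_edgeSet _).1 (hQ.1 hqa)
  rcases a with v | g
  · have hv : v ∈ c.fE := mg_adj_inl_inr.1 hadj.symm
    rcases Sym2.mem_iff.1 hv with rfl | rfl
    · exact rfl
    · exact absurd ⟨Sum.inl c.ys, hqa, rfl⟩ hnc
  · obtain ⟨hne, w, hw1, hw2⟩ := mg_adj_inr_inr.1 hadj
    rcases Sym2.mem_iff.1 (hw1 : w ∈ c.fE) with rfl | rfl
    · exact ⟨c.xs, hw2, rfl⟩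
    · exact absurd ⟨Sum.inr g, hqa, c.ys, hw2, rfl⟩ hnc

lemma psi_keeps (hQ : IsPerfMatchSet (middleGraph c.H') Q) :
    IsPerfMatchSet (middleGraph c.H) (c.Psi Q) := by
  by_cases hc : c.cond Q
  · rw [Psi, if_pos hc]
    exact c.psi_matching hQ (Or.inl ⟨rfl, rfl⟩ : c.Pr c.x c.y)
      (rfl : ((c.eEdge c.x c.hux : c.H.edgeSet) : Sym2 V) = s(c.u, c.x))
      (rfl : ((c.eEdge c.y c.huy : c.H.edgeSet) : Sym2 V) = s(c.u, c.y))
      (c.cond_touch hQ hc)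
  · rw [Psi, if_neg hc]
    exact c.psi_matching hQ (Or.inr ⟨rfl, rfl⟩ : c.Pr c.y c.x)
      (rfl : ((c.eEdge c.y c.huy : c.H.edgeSet) : Sym2 V) = s(c.u, c.y))
      (rfl : ((c.eEdge c.x c.hux : c.H.edgeSet) : Sym2 V) = s(c.u, c.x))
      (c.not_cond_touch hQ hc)

lemma psi_phi_total {P : Set (Sym2 (V ⊕ c.H.edgeSet))}
    (hP : IsPerfMatchSet (middleGraph c.H) P) : c.Psi (c.Phi P) = P := by
  obtain ⟨z, zb, e, eb, hpr, hev, hebv, hup⟩ := c.exists_upair hP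
  have hcond := c.cond_phi hP hpr hev hebv hup
  rcases hpr with ⟨hz, hzb⟩ | ⟨hz, hzb⟩
  · have hc : c.cond (c.Phi P) := hcond.2 hzb
    rw [Psi, if_pos hc]
    have he : c.eEdge c.x c.hux = e := Subtype.ext (by rw [hev, hz]; rfl)
    have heb : c.eEdge c.y c.huy = eb := Subtype.ext (by rw [hebv, hzb]; rfl)
    rw [he, heb]
    exact c.psi_eq_aux hP (Or.inl ⟨hz, hzb⟩) hev hebv hup
  · have hc : ¬ c.cond (c.Phi P) := fun hh => c.hxy ((hcond.1 hh).symm.trans hzb).symm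
    rw [Psi, if_neg hc]
    have he : c.eEdge c.y c.huy = e := Subtype.ext (by rw [hev, hz]; rfl)
    have heb : c.eEdge c.x c.hux = eb := Subtype.ext (by rw [hebv, hzb]; rfl)
    rw [he, heb]
    exact c.psi_eq_aux hP (Or.inr ⟨hz, hzb⟩) hev hebv hup

lemma phi_psi_total (Q : Set (Sym2 (c.VS ⊕ c.H'.edgeSet))) : c.Phi (c.Psi Q) = Q := by
  by_cases hc : c.cond Q
  · rw [Psi, if_pos hc]
    exact c.phi_psi_aux _ _ (Sym2.mem_mk_left _ _) Q
  · rw [Psi, if_neg hc]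
    exact c.phi_psi_aux _ _ (Sym2.mem_mk_left _ _) Q

lemma count_eq : pmCount (middleGraph c.H) = pmCount (middleGraph c.H') := by
  rw [pmCount, pmCount, ← Nat.card_coe_set_eq, ← Nat.card_coe_set_eq]
  refine Nat.card_congr ?_
  exact {
    toFun := fun P => ⟨c.Phi P.1, c.phi_keeps P.2⟩
    invFun := fun Q => ⟨c.Psi Q.1, c.psi_keeps Q.2⟩
    left_inv := fun P => Subtype.ext (c.psi_phi_total P.2)
    right_inv := fun Q => Subtype.ext (c.phi_psi_total Q.1) }

end A

end Ctx
end MGPf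


/-- If `u` is a vertex of degree `2` in `H` whose two neighbours `x` and
`y` are distinct and non-adjacent, and `H'` is obtained from `H` by deleting `u` and
adding the edge `xy`, then `M(H)` and `M(H')` have the same number of perfect matchings. -/
theorem middle_graph_pm_suppress_degree_two {V : Type*} [Fintype V] [DecidableEq V]
    (H : SimpleGraph V) [DecidableRel H.Adj] (u x y : V)
    (hux : H.Adj u x) (huy : H.Adj u y) (hdeg : H.degree u = 2)
    (hxy : x ≠ y) (hnadj : ¬ H.Adj x y) :
    pmCount (middleGraph H) =
      pmCount (middleGraph
        (H.induce {w | w ≠ u} ⊔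
          SimpleGraph.fromEdgeSet
            {s((⟨x, hux.ne'⟩ : {w | w ≠ u}), (⟨y, huy.ne'⟩ : {w | w ≠ u}))})) := by
  have hnbr : ∀ v, H.Adj u v → v = x ∨ v = y := by
    intro v hv
    have hsub : ({x, y} : Finset V) ⊆ H.neighborFinset u := by
      intro w hw
      rcases Finset.mem_insert.1 hw with h | h
      · rw [h]
        exact (SimpleGraph.mem_neighborFinset (G := H) (v := u) x).2 hux
      · rw [Finset.mem_singleton.1 h]
        exact (SimpleGraph.mem_neighborFinset (G := H) (v := u) y).2 huy
    have heq : ({x, y} : Finset V) = H.neighborFinset u :=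
      Finset.eq_of_subset_of_card_le hsub
        (by rw [show (H.neighborFinset u).card = H.degree u from rfl, hdeg,
          Finset.card_pair hxy])
    have : v ∈ ({x, y} : Finset V) := heq ▸ (SimpleGraph.mem_neighborFinset (G := H) (v := u) v).2 hv
    rcases Finset.mem_insert.1 this with h | h
    · exact Or.inl h
    · exact Or.inr (Finset.mem_singleton.1 h)
  exact MGPf.Ctx.count_eq ⟨H, u, x, y, hux, huy, hxy, hnadj, hnbr⟩
end

section
/- Let G be a connected cubic simple graph with n vertices and m = 3n/2 edges, m even, and let N be a perfect matching of the line graph L(G). For each vertex v of G such that G_v contains an edge of N, say the pair {e1, e2} ⊆ E(G) with e1, e2 incident to v, let e3 be the third edge of G incident to v, and let M'_N be the set of edges {v, e3} of M(G) over all such vertices v. Then M'_N is a matching of M(G) of size 3n/4. -/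
variable {V : Type*}

/-- Given a set `N` of edges of the line graph of `G`, the set `M'_N` of those edges of
`M(G)` of the form `{v, e₃}` where the `K₄`-subgraph `G_v` contains an edge `{e₁, e₂}`
of `N` and `e₃` is the third edge of `G` incident with `v`. -/
def matchEdges (G : SimpleGraph V) (N : Set (Sym2 G.edgeSet)) :
    Set (Sym2 (V ⊕ G.edgeSet)) :=
  {p | ∃ (v : V) (e1 e2 e3 : G.edgeSet), s(e1, e2) ∈ N ∧
    v ∈ (e1 : Sym2 V) ∧ v ∈ (e2 : Sym2 V) ∧ v ∈ (e3 : Sym2 V) ∧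
    e3 ≠ e1 ∧ e3 ≠ e2 ∧ p = s(Sum.inl v, Sum.inr e3)}

section Aux
variable {V : Type*} [Fintype V] [DecidableEq V] (G : SimpleGraph V) [DecidableRel G.Adj]

lemma aux_four_edges (hcubic : G.IsRegularOfDegree 3) (v : V)
    (a b c d : G.edgeSet) (hva : v ∈ (a : Sym2 V)) (hvb : v ∈ (b : Sym2 V))
    (hvc : v ∈ (c : Sym2 V)) (hvd : v ∈ (d : Sym2 V))
    (hab : a ≠ b) (hac : a ≠ c) (had : a ≠ d)
    (hbc : b ≠ c) (hbd : b ≠ d) (hcd : c ≠ d) : False := by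
  have hab' : (a : Sym2 V) ≠ (b : Sym2 V) := fun h => hab (Subtype.ext h)
  have hac' : (a : Sym2 V) ≠ (c : Sym2 V) := fun h => hac (Subtype.ext h)
  have had' : (a : Sym2 V) ≠ (d : Sym2 V) := fun h => had (Subtype.ext h)
  have hbc' : (b : Sym2 V) ≠ (c : Sym2 V) := fun h => hbc (Subtype.ext h)
  have hbd' : (b : Sym2 V) ≠ (d : Sym2 V) := fun h => hbd (Subtype.ext h)
  have hcd' : (c : Sym2 V) ≠ (d : Sym2 V) := fun h => hcd (Subtype.ext h)
  have hsub : ({(a : Sym2 V), (b : Sym2 V), (c : Sym2 V), (d : Sym2 V)} : Finset (Sym2 V)) ⊆ G.incidenceFinset v := by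
    intro e he
    simp only [Finset.mem_insert, Finset.mem_singleton] at he
    rw [SimpleGraph.mem_incidenceFinset]
    rcases he with rfl | rfl | rfl | rfl
    exacts [⟨a.2, hva⟩, ⟨b.2, hvb⟩, ⟨c.2, hvc⟩, ⟨d.2, hvd⟩]
  have hc4 : ({(a : Sym2 V), (b : Sym2 V), (c : Sym2 V), (d : Sym2 V)} : Finset (Sym2 V)).card = 4 := by
    rw [Finset.card_insert_of_notMem (by simp [hab', hac', had']),
        Finset.card_insert_of_notMem (by simp [hbc', hbd']),
        Finset.card_insert_of_notMem (by simp [hcd']),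
        Finset.card_singleton]
  have hle := Finset.card_le_card hsub
  rw [hc4, SimpleGraph.card_incidenceFinset_eq_degree, hcubic v] at hle
  omega

lemma aux_third (hcubic : G.IsRegularOfDegree 3) (v : V) (a b : G.edgeSet)
    (hva : v ∈ (a : Sym2 V)) (hvb : v ∈ (b : Sym2 V)) (hab : a ≠ b) :
    ∃ c : G.edgeSet, v ∈ (c : Sym2 V) ∧ c ≠ a ∧ c ≠ b := by
  by_contra h
  push_neg at h
  have hsub : G.incidenceFinset v ⊆ {(a : Sym2 V), (b : Sym2 V)} := by
    intro e he
    rw [SimpleGraph.mem_incidenceFinset] at he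
    have he1 : e ∈ G.edgeSet := he.1
    have he2 : v ∈ e := he.2
    by_cases hea : (⟨e, he1⟩ : G.edgeSet) = a
    · simp [Finset.mem_insert, ← congrArg Subtype.val hea]
    · have := h ⟨e, he1⟩ he2 hea
      simp [Finset.mem_insert, ← congrArg Subtype.val this]
  have hle := Finset.card_le_card hsub
  rw [SimpleGraph.card_incidenceFinset_eq_degree, hcubic v] at hle
  rcases Finset.card_pair_eq_one_or_two (a := (a : Sym2 V)) (b := (b : Sym2 V)) with h1 | h1 <;>
    omega

lemma aux_unique (hcubic : G.IsRegularOfDegree 3) (v : V) (e1 e2 e3 e3' : G.edgeSet)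
    (h12 : e1 ≠ e2) (hv1 : v ∈ (e1 : Sym2 V)) (hv2 : v ∈ (e2 : Sym2 V))
    (hv3 : v ∈ (e3 : Sym2 V)) (hv3' : v ∈ (e3' : Sym2 V))
    (h31 : e3 ≠ e1) (h32 : e3 ≠ e2) (h31' : e3' ≠ e1) (h32' : e3' ≠ e2) : e3 = e3' := by
  by_contra hne
  exact aux_four_edges G hcubic v e1 e2 e3 e3' hv1 hv2 hv3 hv3' h12 h31.symm h31'.symm
    h32.symm h32'.symm hne

end Aux
/-- Let `G` be a connected cubic graph with `n` vertices and an even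
number of edges, and `N` a perfect matching of `L(G)`.  Then the set `M'_N` of edges
`{v, e₃}` of `M(G)`, over all vertices `v` whose `K₄`-subgraph `G_v` contains an edge
`{e₁, e₂}` of `N` (with `e₃` the third edge incident with `v`), is a matching of `M(G)`
of size `3n/4`. -/
theorem matchEdges_is_matching {V : Type*} [Fintype V] [DecidableEq V]
    (G : SimpleGraph V) [DecidableRel G.Adj]
    (hconn : G.Connected) (hcubic : G.IsRegularOfDegree 3)
    (heven : Even G.edgeFinset.card)
    (N : Set (Sym2 G.edgeSet)) (hN : IsPerfMatchSet (lineGraph G) N) :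
    matchEdges G N ⊆ (middleGraph G).edgeSet ∧
    (∀ p ∈ matchEdges G N, ∀ q ∈ matchEdges G N, p ≠ q → ∀ a, a ∈ p → a ∉ q) ∧
    (matchEdges G N).ncard = 3 * Fintype.card V / 4 := by
  classical
  obtain ⟨hNsub, hNdisj, hNcov⟩ := hN
  have hadj : ∀ q ∈ N, ∀ (e f : G.edgeSet), q = s(e, f) →
      e ≠ f ∧ ∃ v, v ∈ (e : Sym2 V) ∧ v ∈ (f : Sym2 V) := by
    intro q hq e f hef
    have h := hNsub hq
    rw [hef, SimpleGraph.mem_edgeSet] at h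
    exact h
  refine ⟨?_, ?_, ?_⟩
  · rintro p ⟨v, e1, e2, e3, hNe, h1, h2, h3, h31, h32, rfl⟩
    rw [SimpleGraph.mem_edgeSet]
    exact h3
  · rintro p ⟨v, e1, e2, e3, hp1, hpv1, hpv2, hpv3, hp31, hp32, rfl⟩
      q ⟨w, f1, f2, f3, hq1, hqw1, hqw2, hqw3, hq31, hq32, rfl⟩ hpq a hap haq
    rw [Sym2.mem_iff] at hap haq
    obtain ⟨h12, -⟩ := hadj _ hp1 e1 e2 rfl
    obtain ⟨hf12, -⟩ := hadj _ hq1 f1 f2 rfl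
    rcases hap with rfl | rfl
    · rcases haq with h | h
      · -- Sum.inl v = Sum.inl w
        obtain rfl : v = w := Sum.inl.inj h
        by_cases heq : s(e1, e2) = s(f1, f2)
        · rw [Sym2.eq_iff] at heq
          have hf3e : f3 ≠ e1 ∧ f3 ≠ e2 := by
            rcases heq with ⟨rfl, rfl⟩ | ⟨rfl, rfl⟩
            · exact ⟨hq31, hq32⟩
            · exact ⟨hq32, hq31⟩
          have : e3 = f3 := aux_unique G hcubic v e1 e2 e3 f3 h12 hpv1 hpv2 hpv3 hqw3
            hp31 hp32 hf3e.1 hf3e.2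
          exact hpq (by rw [this])
        · have h1 := hNdisj _ hp1 _ hq1 heq e1 (Sym2.mem_mk_left _ _)
          have h2 := hNdisj _ hp1 _ hq1 heq e2 (Sym2.mem_mk_right _ _)
          rw [Sym2.mem_iff] at h1 h2
          push_neg at h1 h2
          exact aux_four_edges G hcubic v e1 e2 f1 f2 hpv1 hpv2 hqw1 hqw2
            h12 h1.1 h1.2 h2.1 h2.2 hf12
      · simp at h
    · rcases haq with h | h
      · simp at h
      · obtain rfl : e3 = f3 := Sum.inr.inj h
        by_cases hvw : v = w
        · exact hpq (by rw [hvw])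
        · have he3 : (e3 : Sym2 V) = s(v, w) := (Sym2.mem_and_mem_iff hvw).1 ⟨hpv3, hqw3⟩
          obtain ⟨r, hrN, hr⟩ := hNcov e3
          rw [Sym2.mem_iff_exists] at hr
          obtain ⟨g, rfl⟩ := hr
          obtain ⟨hge, x, hx3, hxg⟩ := hadj _ hrN e3 g rfl
          rw [he3, Sym2.mem_iff] at hx3
          rcases hx3 with rfl | rfl
          · -- x = v, pair {e3, g} vs {e1, e2} at v
            have hne : s(e1, e2) ≠ s(e3, g) := by
              intro h'
              have : (e3 : G.edgeSet) ∈ s(e1, e2) := h' ▸ Sym2.mem_mk_left _ _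
              rw [Sym2.mem_iff] at this
              rcases this with h'' | h''
              exacts [hp31 h'', hp32 h'']
            have h1 := hNdisj _ hp1 _ hrN hne e1 (Sym2.mem_mk_left _ _)
            have h2 := hNdisj _ hp1 _ hrN hne e2 (Sym2.mem_mk_right _ _)
            rw [Sym2.mem_iff] at h1 h2
            push_neg at h1 h2
            exact aux_four_edges G hcubic x e1 e2 e3 g hpv1 hpv2 hpv3 hxg
              h12 h1.1 h1.2 h2.1 h2.2 hge
          · -- x = w, pair {e3, g} vs {f1, f2} at w
            have hne : s(f1, f2) ≠ s(e3, g) := by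
              intro h'
              have : (e3 : G.edgeSet) ∈ s(f1, f2) := h' ▸ Sym2.mem_mk_left _ _
              rw [Sym2.mem_iff] at this
              rcases this with h'' | h''
              exacts [hq31 h'', hq32 h'']
            have h1 := hNdisj _ hq1 _ hrN hne f1 (Sym2.mem_mk_left _ _)
            have h2 := hNdisj _ hq1 _ hrN hne f2 (Sym2.mem_mk_right _ _)
            rw [Sym2.mem_iff] at h1 h2
            push_neg at h1 h2
            exact aux_four_edges G hcubic x f1 f2 e3 g hqw1 hqw2 hqw3 hxg
              hf12 h1.1 h1.2 h2.1 h2.2 hge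
  · -- counting
    haveI : Nonempty V := hconn.nonempty
    have hex : ∀ q ∈ N, ∃ x : V × G.edgeSet, ∃ e1 e2 : G.edgeSet, q = s(e1, e2) ∧
        x.1 ∈ (e1 : Sym2 V) ∧ x.1 ∈ (e2 : Sym2 V) ∧ x.1 ∈ (x.2 : Sym2 V) ∧
        x.2 ≠ e1 ∧ x.2 ≠ e2 := by
      intro q hq
      induction q using Sym2.ind with
      | _ e1 e2 =>
        obtain ⟨hne, v, hv1, hv2⟩ := hadj _ hq e1 e2 rfl
        obtain ⟨e3, hv3, h31, h32⟩ := aux_third G hcubic v e1 e2 hv1 hv2 hne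
        exact ⟨(v, e3), e1, e2, rfl, hv1, hv2, hv3, h31, h32⟩
    set f : Sym2 G.edgeSet → Sym2 (V ⊕ G.edgeSet) := fun q =>
      if h : ∃ x : V × G.edgeSet, ∃ e1 e2 : G.edgeSet, q = s(e1, e2) ∧
          x.1 ∈ (e1 : Sym2 V) ∧ x.1 ∈ (e2 : Sym2 V) ∧ x.1 ∈ (x.2 : Sym2 V) ∧
          x.2 ≠ e1 ∧ x.2 ≠ e2
      then s(Sum.inl h.choose.1, Sum.inr h.choose.2)
      else s(Sum.inl (Classical.arbitrary V), Sum.inl (Classical.arbitrary V)) with hf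
    have hfval : ∀ (q : Sym2 G.edgeSet)
        (h : ∃ x : V × G.edgeSet, ∃ e1 e2 : G.edgeSet, q = s(e1, e2) ∧
          x.1 ∈ (e1 : Sym2 V) ∧ x.1 ∈ (e2 : Sym2 V) ∧ x.1 ∈ (x.2 : Sym2 V) ∧
          x.2 ≠ e1 ∧ x.2 ≠ e2),
        f q = s(Sum.inl h.choose.1, Sum.inr h.choose.2) := by
      intro q h
      rw [hf]
      exact dif_pos h
    -- f '' N = matchEdges
    have himg : f '' N = matchEdges G N := by
      ext p
      constructor
      · rintro ⟨q, hq, rfl⟩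
        have h := hex q hq
        obtain ⟨e1, e2, hqeq, hx1, hx2, hx3, hxn1, hxn2⟩ := h.choose_spec
        rw [hfval q h]
        exact ⟨h.choose.1, e1, e2, h.choose.2, hqeq ▸ hq, hx1, hx2, hx3, hxn1, hxn2, rfl⟩
      · rintro ⟨v, e1, e2, e3, hNe, h1, h2, h3, h31, h32, rfl⟩
        refine ⟨s(e1, e2), hNe, ?_⟩
        have h := hex _ hNe
        obtain ⟨a, b, hqeq, hx1, hx2, hx3, hxn1, hxn2⟩ := h.choose_spec
        rw [hfval _ h]
        obtain ⟨h12, -⟩ := hadj _ hNe e1 e2 rfl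
        -- common vertex of e1, e2 is unique
        have hxv : h.choose.1 = v := by
          by_contra hne
          rw [Sym2.eq_iff] at hqeq
          have hx1' : h.choose.1 ∈ (e1 : Sym2 V) := by
            rcases hqeq with ⟨rfl, rfl⟩ | ⟨rfl, rfl⟩
            exacts [hx1, hx2]
          have hx2' : h.choose.1 ∈ (e2 : Sym2 V) := by
            rcases hqeq with ⟨rfl, rfl⟩ | ⟨rfl, rfl⟩
            exacts [hx2, hx1]
          exact h12 (Subtype.ext (Sym2.eq_of_ne_mem hne hx1' h1 hx2' h2))
        have hxe : h.choose.2 = e3 := by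
          rw [Sym2.eq_iff] at hqeq
          have hn1 : h.choose.2 ≠ e1 := by
            rcases hqeq with ⟨rfl, rfl⟩ | ⟨rfl, rfl⟩
            exacts [hxn1, hxn2]
          have hn2 : h.choose.2 ≠ e2 := by
            rcases hqeq with ⟨rfl, rfl⟩ | ⟨rfl, rfl⟩
            exacts [hxn2, hxn1]
          exact aux_unique G hcubic v e1 e2 h.choose.2 e3 h12 h1 h2 (hxv ▸ hx3) h3
            hn1 hn2 h31 h32
        rw [hxv, hxe]
      -- injectivity
    have hinj : Set.InjOn f N := by
      intro q1 hq1 q2 hq2 hfeq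
      by_contra hne
      have h1 := hex q1 hq1
      have h2 := hex q2 hq2
      rw [hfval q1 h1, hfval q2 h2, Sym2.eq_iff] at hfeq
      have hv : h1.choose.1 = h2.choose.1 ∧ h1.choose.2 = h2.choose.2 := by
        rcases hfeq with ⟨ha, hb⟩ | ⟨ha, hb⟩
        · exact ⟨Sum.inl.inj ha, Sum.inr.inj hb⟩
        · simp at ha
      obtain ⟨a, b, hq1eq, ha1, ha2, -, -, -⟩ := h1.choose_spec
      obtain ⟨c, d, hq2eq, hc1, hc2, -, -, -⟩ := h2.choose_spec
      rw [hv.1] at ha1 ha2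
      obtain ⟨hab, -⟩ := hadj _ hq1 a b (hq1eq)
      obtain ⟨hcd, -⟩ := hadj _ hq2 c d (hq2eq)
      rw [hq1eq, hq2eq] at hne
      have hda := hNdisj _ (hq1eq ▸ hq1) _ (hq2eq ▸ hq2) hne a (Sym2.mem_mk_left _ _)
      have hdb := hNdisj _ (hq1eq ▸ hq1) _ (hq2eq ▸ hq2) hne b (Sym2.mem_mk_right _ _)
      rw [Sym2.mem_iff] at hda hdb
      push_neg at hda hdb
      exact aux_four_edges G hcubic h2.choose.1 a b c d ha1 ha2 hc1 hc2
        hab hda.1 hda.2 hdb.1 hdb.2 hcd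
    have hcard1 : (matchEdges G N).ncard = N.ncard := by
      rw [← himg, Set.ncard_image_of_injOn hinj]
    -- |N| = (card of edge set) / 2
    have hNfin : N.Finite := Set.toFinite N
    set g : G.edgeSet → Sym2 G.edgeSet := fun w => (hNcov w).choose with hg
    have hg1 : ∀ w, g w ∈ N := fun w => (hNcov w).choose_spec.1
    have hg2 : ∀ w, w ∈ g w := fun w => (hNcov w).choose_spec.2
    have hgmem : ∀ w q, q ∈ N → w ∈ q → g w = q := by
      intro w q hq hw
      by_contra hne
      exact hNdisj _ (hg1 w) _ hq hne w (hg2 w) hw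
    have hcardsum : Fintype.card G.edgeSet =
        ∑ q ∈ hNfin.toFinset, (Finset.univ.filter (fun w => g w = q)).card := by
      rw [← Finset.card_univ]
      exact Finset.card_eq_sum_card_fiberwise (fun w _ => hNfin.mem_toFinset.2 (hg1 w))
    have hfib : ∀ q ∈ hNfin.toFinset, (Finset.univ.filter (fun w => g w = q)).card = 2 := by
      intro q hq
      rw [hNfin.mem_toFinset] at hq
      induction q using Sym2.ind with
      | _ a b =>
        obtain ⟨hne, -⟩ := hadj _ hq a b rfl
        have heq : Finset.univ.filter (fun w => g w = s(a, b)) = {a, b} := by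
          ext w
          simp only [Finset.mem_filter, Finset.mem_univ, true_and, Finset.mem_insert,
            Finset.mem_singleton]
          constructor
          · intro h
            have hw := hg2 w
            rw [h] at hw
            exact Sym2.mem_iff.1 hw
          · rintro (rfl | rfl)
            exacts [hgmem _ _ hq (Sym2.mem_mk_left _ _), hgmem _ _ hq (Sym2.mem_mk_right _ _)]
        rw [heq, Finset.card_pair hne]
    have hcard2 : Fintype.card G.edgeSet = 2 * N.ncard := by
      rw [hcardsum, Finset.sum_congr rfl hfib, Finset.sum_const, smul_eq_mul,
        Set.ncard_eq_toFinset_card N hNfin]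
      ring
    have hdeg : 3 * Fintype.card V = 2 * G.edgeFinset.card := by
      rw [← G.sum_degrees_eq_twice_card_edges]
      rw [Finset.sum_congr rfl (fun v _ => hcubic v), Finset.sum_const, smul_eq_mul,
        Finset.card_univ]
      ring
    have hm : G.edgeFinset.card = Fintype.card G.edgeSet := by
      rw [SimpleGraph.edgeFinset, Set.toFinset_card]
    rw [hcard1]
    omega
end

section
/- Let G be a connected cubic simple graph with n vertices and m = 3n/2 edges, m even. For a perfect matching N of the line graph L(G), let M_N* denote the family of all perfect matchings of M(G) of the form M'_N ∪ M, where M'_N = { {v, e3} : v ∈ V(G) such that G_v contains the edge {e1, e2} of N, with e3 the third edge incident to v }, and M ranges over perfect matchings of the union of the subgraphs G_v containing no edge of N. Then for any two distinct perfect matchings N and N' of L(G), the families M_N* and M_{N'}* are disjoint; moreover each family M_N* has exactly 3^(n/4) elements. -/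
variable {V : Type*}

/-- For a vertex `v` of `G`, the set of vertices of the middle graph `M(G)` consisting of
the `v`-vertex `v` together with the `e`-vertices corresponding to the edges of `G`
incident with `v`.  For a cubic graph this induces a `K₄` in `M(G)`, denoted `G_v`. -/
def K4set (G : SimpleGraph V) (v : V) : Set (V ⊕ G.edgeSet) :=
  {a | a = Sum.inl v ∨ ∃ e : G.edgeSet, v ∈ (e : Sym2 V) ∧ a = Sum.inr e}

/-- Given a set `N` of edges of the line graph of `G`, the set of vertices `v` of `G`
such that the `K₄`-subgraph `G_v` of `M(G)` contains no edge of `N`, i.e. no member of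
`N` has both endpoints incident with `v`. -/
def badSet (G : SimpleGraph V) (N : Set (Sym2 G.edgeSet)) : Set V :=
  {v | ∀ p ∈ N, ¬ ∀ x ∈ p, v ∈ (x : Sym2 V)}

/-- The family `M_N*` of perfect matchings of `M(G)` of the form `M'_N ∪ M`, where `M`
ranges over the perfect matchings of the union of the `K₄`-subgraphs `G_v` containing
no edge of `N`. -/
def MNstar (G : SimpleGraph V) (N : Set (Sym2 G.edgeSet)) :
    Set (Set (Sym2 (V ⊕ G.edgeSet))) :=
  {P | ∃ M : Set (Sym2 (V ⊕ G.edgeSet)),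
    (∀ p ∈ M, p ∈ (middleGraph G).edgeSet ∧ ∃ v ∈ badSet G N, ∀ a ∈ p, a ∈ K4set G v) ∧
    (∀ p ∈ M, ∀ q ∈ M, p ≠ q → ∀ a, a ∈ p → a ∉ q) ∧
    (∀ v ∈ badSet G N, ∀ a ∈ K4set G v, ∃ p ∈ M, a ∈ p) ∧
    P = matchEdges G N ∪ M}

-- chunk 1 lemmas

lemma lineGraph_adj {G : SimpleGraph V} {e f : G.edgeSet} :
    (lineGraph G).Adj e f ↔ e ≠ f ∧ ∃ v, v ∈ (e : Sym2 V) ∧ v ∈ (f : Sym2 V) := Iff.rfl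

lemma inl_mem_K4set {G : SimpleGraph V} {v w : V} :
    Sum.inl w ∈ K4set G v ↔ w = v := by
  simp [K4set]

lemma inr_mem_K4set {G : SimpleGraph V} {v : V} {e : G.edgeSet} :
    Sum.inr e ∈ K4set G v ↔ v ∈ (e : Sym2 V) := by
  simp [K4set]

lemma inl_mem_K4set' {G : SimpleGraph V} {v : V} : Sum.inl v ∈ K4set G v :=
  inl_mem_K4set.2 rfl

lemma threeEdges [Fintype V] [DecidableEq V] (G : SimpleGraph V) [DecidableRel G.Adj]
    (hcubic : G.IsRegularOfDegree 3) (v : V) :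
    ∃ a b c : G.edgeSet, a ≠ b ∧ a ≠ c ∧ b ≠ c ∧
      v ∈ (a : Sym2 V) ∧ v ∈ (b : Sym2 V) ∧ v ∈ (c : Sym2 V) ∧
      ∀ e : G.edgeSet, v ∈ (e : Sym2 V) → e = a ∨ e = b ∨ e = c := by
  have h3 : (G.incidenceFinset v).card = 3 := by
    rw [G.card_incidenceFinset_eq_degree]; exact hcubic v
  rw [Finset.card_eq_three] at h3
  obtain ⟨x, y, z, hxy, hxz, hyz, hset⟩ := h3
  have hx : x ∈ G.incidenceSet v := by
    rw [← SimpleGraph.mem_incidenceFinset, hset]; simp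
  have hy : y ∈ G.incidenceSet v := by
    rw [← SimpleGraph.mem_incidenceFinset, hset]; simp
  have hz : z ∈ G.incidenceSet v := by
    rw [← SimpleGraph.mem_incidenceFinset, hset]; simp
  refine ⟨⟨x, hx.1⟩, ⟨y, hy.1⟩, ⟨z, hz.1⟩, ?_, ?_, ?_, hx.2, hy.2, hz.2, ?_⟩
  · exact fun h => hxy (congrArg Subtype.val h)
  · exact fun h => hxz (congrArg Subtype.val h)
  · exact fun h => hyz (congrArg Subtype.val h)
  · intro e he
    have : (e : Sym2 V) ∈ G.incidenceFinset v := by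
      rw [SimpleGraph.mem_incidenceFinset]; exact ⟨e.2, he⟩
    rw [hset] at this
    simp only [Finset.mem_insert, Finset.mem_singleton] at this
    rcases this with h | h | h
    · exact Or.inl (Subtype.ext h)
    · exact Or.inr (Or.inl (Subtype.ext h))
    · exact Or.inr (Or.inr (Subtype.ext h))

lemma thirdEdge [Fintype V] [DecidableEq V] (G : SimpleGraph V) [DecidableRel G.Adj]
    (hcubic : G.IsRegularOfDegree 3) {v : V} {e1 e2 : G.edgeSet}
    (hne : e1 ≠ e2) (h1 : v ∈ (e1 : Sym2 V)) (h2 : v ∈ (e2 : Sym2 V)) :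
    ∃ e3 : G.edgeSet, v ∈ (e3 : Sym2 V) ∧ e3 ≠ e1 ∧ e3 ≠ e2 ∧
      ∀ e : G.edgeSet, v ∈ (e : Sym2 V) → e = e1 ∨ e = e2 ∨ e = e3 := by
  obtain ⟨a, b, c, hab, hac, hbc, hva, hvb, hvc, hcl⟩ := threeEdges G hcubic v
  rcases hcl e1 h1 with rfl | rfl | rfl <;> rcases hcl e2 h2 with rfl | rfl | rfl
  · exact (hne rfl).elim
  · exact ⟨c, hvc, Ne.symm hac, Ne.symm hbc, fun e he => by rcases hcl e he with rfl|rfl|rfl <;> tauto⟩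
  · exact ⟨b, hvb, Ne.symm hab, hbc, fun e he => by rcases hcl e he with rfl|rfl|rfl <;> tauto⟩
  · exact ⟨c, hvc, Ne.symm hbc, Ne.symm hac, fun e he => by rcases hcl e he with rfl|rfl|rfl <;> tauto⟩
  · exact (hne rfl).elim
  · exact ⟨a, hva, hab, hac, fun e he => by rcases hcl e he with rfl|rfl|rfl <;> tauto⟩
  · exact ⟨b, hvb, hbc, Ne.symm hab, fun e he => by rcases hcl e he with rfl|rfl|rfl <;> tauto⟩
  · exact ⟨a, hva, hac, hab, fun e he => by rcases hcl e he with rfl|rfl|rfl <;> tauto⟩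
  · exact (hne rfl).elim

lemma hostUnique [Fintype V] [DecidableEq V] (G : SimpleGraph V) [DecidableRel G.Adj]
    (hcubic : G.IsRegularOfDegree 3) {N : Set (Sym2 G.edgeSet)}
    (hN : IsPerfMatchSet (lineGraph G) N) {v : V} {p q : Sym2 G.edgeSet}
    (hp : p ∈ N) (hq : q ∈ N) (hpv : ∀ x ∈ p, v ∈ (x : Sym2 V))
    (hqv : ∀ x ∈ q, v ∈ (x : Sym2 V)) : p = q := by
  classical
  by_contra hne
  revert hp hpv
  induction p using Sym2.ind with | _ e1 e2 => ?_
  intro hp hpv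
  revert hq hqv hne
  induction q using Sym2.ind with | _ f1 f2 => ?_
  intro hq hqv hne
  have he12 : e1 ≠ e2 := (lineGraph_adj.1 ((lineGraph G).mem_edgeSet.1 (hN.1 hp))).1
  have hf12 : f1 ≠ f2 := (lineGraph_adj.1 ((lineGraph G).mem_edgeSet.1 (hN.1 hq))).1
  have he1q : e1 ∉ s(f1, f2) := hN.2.1 _ hp _ hq hne e1 (Sym2.mem_mk_left _ _)
  have he2q : e2 ∉ s(f1, f2) := hN.2.1 _ hp _ hq hne e2 (Sym2.mem_mk_right _ _)
  simp only [Sym2.mem_iff, not_or] at he1q he2q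
  obtain ⟨a, b, c, hab, hac, hbc, hva, hvb, hvc, hcl⟩ := threeEdges G hcubic v
  have hsub : ({e1, e2, f1, f2} : Finset G.edgeSet) ⊆ {a, b, c} := by
    intro t ht
    simp only [Finset.mem_insert, Finset.mem_singleton] at ht ⊢
    rcases ht with rfl | rfl | rfl | rfl
    · exact hcl t (hpv t (Sym2.mem_mk_left _ _))
    · exact hcl t (hpv t (Sym2.mem_mk_right _ _))
    · exact hcl t (hqv t (Sym2.mem_mk_left _ _))
    · exact hcl t (hqv t (Sym2.mem_mk_right _ _))
  have h4 : ({e1, e2, f1, f2} : Finset G.edgeSet).card = 4 := by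
    rw [Finset.card_insert_of_notMem (by simp [he12, he1q.1, he1q.2]),
      Finset.card_insert_of_notMem (by simp [he2q.1, he2q.2]),
      Finset.card_insert_of_notMem (by simp [hf12]), Finset.card_singleton]
  have h3 : ({a, b, c} : Finset G.edgeSet).card ≤ 3 := by
    apply le_trans (Finset.card_insert_le _ _)
    have := Finset.card_insert_le b ({c} : Finset G.edgeSet)
    simp at this ⊢
    omega
  have := Finset.card_le_card hsub
  omega

lemma badDisjoint (G : SimpleGraph V) {N : Set (Sym2 G.edgeSet)}
    (hN : IsPerfMatchSet (lineGraph G) N) {v w : V}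
    (hv : v ∈ badSet G N) (hw : w ∈ badSet G N) (hvw : v ≠ w)
    {e : G.edgeSet} (hev : v ∈ (e : Sym2 V)) (hew : w ∈ (e : Sym2 V)) : False := by
  obtain ⟨p, hpN, hep⟩ := hN.2.2 e
  obtain ⟨g, rfl⟩ := Sym2.mem_iff_exists.1 hep
  have hadj : (lineGraph G).Adj e g := (lineGraph G).mem_edgeSet.1 (hN.1 hpN)
  obtain ⟨u, hue, hug⟩ := (lineGraph_adj.1 hadj).2
  have heq : (e : Sym2 V) = s(v, w) := (Sym2.mem_and_mem_iff hvw).1 ⟨hev, hew⟩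
  have hu : u = v ∨ u = w := by
    rw [heq] at hue; exact Sym2.mem_iff.1 hue
  have hhost : ∀ x ∈ s(e, g), u ∈ (x : Sym2 V) := by
    intro x hx
    rcases Sym2.mem_iff.1 hx with rfl | rfl
    · exact hue
    · exact hug
  rcases hu with rfl | rfl
  · exact hv _ hpN hhost
  · exact hw _ hpN hhost

/-- `M` is a perfect matching of the union of the `K₄`s over `B`, each edge lying
inside a single `K₄`. -/
def CoverM (G : SimpleGraph V) (B : Set V) (M : Set (Sym2 (V ⊕ G.edgeSet))) : Prop :=
  (∀ p ∈ M, p ∈ (middleGraph G).edgeSet ∧ ∃ v ∈ B, ∀ a ∈ p, a ∈ K4set G v) ∧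
  (∀ p ∈ M, ∀ q ∈ M, p ≠ q → ∀ a, a ∈ p → a ∉ q) ∧
  (∀ v ∈ B, ∀ a ∈ K4set G v, ∃ p ∈ M, a ∈ p)

/-- the `K₄`-matching pairing `v` with `x` and `y` with `z`. -/
def MkPM (G : SimpleGraph V) (v : V) (x y z : G.edgeSet) : Set (Sym2 (V ⊕ G.edgeSet)) :=
  {s(Sum.inl v, Sum.inr x), s(Sum.inr y, Sum.inr z)}

lemma mkPM_mem_coverM (G : SimpleGraph V) {v : V} {a b c : G.edgeSet}
    (hab : a ≠ b) (hac : a ≠ c) (hbc : b ≠ c)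
    (hva : v ∈ (a : Sym2 V)) (hvb : v ∈ (b : Sym2 V)) (hvc : v ∈ (c : Sym2 V))
    (hcl : ∀ e : G.edgeSet, v ∈ (e : Sym2 V) → e = a ∨ e = b ∨ e = c) :
    CoverM G {v} (MkPM G v a b c) := by
  have hP : (s(Sum.inl v, Sum.inr a) : Sym2 (V ⊕ G.edgeSet)) ∈ (middleGraph G).edgeSet := by
    rw [SimpleGraph.mem_edgeSet]; exact hva
  have hQ : (s(Sum.inr b, Sum.inr c) : Sym2 (V ⊕ G.edgeSet)) ∈ (middleGraph G).edgeSet := by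
    rw [SimpleGraph.mem_edgeSet]; exact ⟨hbc, v, hvb, hvc⟩
  have hPsub : ∀ x ∈ (s(Sum.inl v, Sum.inr a) : Sym2 (V ⊕ G.edgeSet)), x ∈ K4set G v := by
    intro x hx
    rcases Sym2.mem_iff.1 hx with rfl | rfl
    · exact inl_mem_K4set'
    · exact inr_mem_K4set.2 hva
  have hQsub : ∀ x ∈ (s(Sum.inr b, Sum.inr c) : Sym2 (V ⊕ G.edgeSet)), x ∈ K4set G v := by
    intro x hx
    rcases Sym2.mem_iff.1 hx with rfl | rfl
    · exact inr_mem_K4set.2 hvb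
    · exact inr_mem_K4set.2 hvc
  refine ⟨?_, ?_, ?_⟩
  · rintro p (rfl | rfl)
    · exact ⟨hP, v, rfl, hPsub⟩
    · exact ⟨hQ, v, rfl, hQsub⟩
  · rintro p (rfl | rfl) q (rfl | rfl) hne x hx hx'
    · exact hne rfl
    · rcases Sym2.mem_iff.1 hx with rfl | rfl <;>
        rcases Sym2.mem_iff.1 hx' with h | h <;> simp_all
    · rcases Sym2.mem_iff.1 hx with rfl | rfl <;>
        rcases Sym2.mem_iff.1 hx' with h | h <;> simp_all
    · exact hne rfl
  · rintro v' (rfl : v' = v) x hx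
    rcases hx with rfl | ⟨e, hve, rfl⟩
    · exact ⟨s(Sum.inl v', Sum.inr a), Or.inl rfl, Sym2.mem_mk_left _ _⟩
    · rcases hcl e hve with rfl | rfl | rfl
      · exact ⟨s(Sum.inl v', Sum.inr e), Or.inl rfl, Sym2.mem_mk_right _ _⟩
      · exact ⟨s(Sum.inr e, Sum.inr c), Or.inr rfl, Sym2.mem_mk_left _ _⟩
      · exact ⟨s(Sum.inr b, Sum.inr e), Or.inr rfl, Sym2.mem_mk_right _ _⟩

lemma coverM_singleton_eq_pair (G : SimpleGraph V) {v : V} {a b c : G.edgeSet}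
    (hab : a ≠ b) (hac : a ≠ c) (hbc : b ≠ c)
    (hcl : ∀ e : G.edgeSet, v ∈ (e : Sym2 V) → e = a ∨ e = b ∨ e = c)
    {M : Set (Sym2 (V ⊕ G.edgeSet))} (hM : CoverM G {v} M)
    (hvb : v ∈ (b : Sym2 V)) (hPa : s(Sum.inl v, Sum.inr a) ∈ M) :
    M = MkPM G v a b c := by
  obtain ⟨hM1, hM2, hM3⟩ := hM
  set P : Sym2 (V ⊕ G.edgeSet) := s(Sum.inl v, Sum.inr a) with hPdef
  obtain ⟨q0, hq0, hbq0⟩ := hM3 v rfl (Sum.inr b) (inr_mem_K4set.2 hvb)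
  have hq0P : q0 ≠ P := by
    rintro rfl
    rcases Sym2.mem_iff.1 hbq0 with h | h <;> simp_all
  have hinlq0 : Sum.inl v ∉ q0 := hM2 P hPa q0 hq0 (Ne.symm hq0P) _ (Sym2.mem_mk_left _ _)
  have hinraq0 : Sum.inr a ∉ q0 := hM2 P hPa q0 hq0 (Ne.symm hq0P) _ (Sym2.mem_mk_right _ _)
  obtain ⟨u, rfl⟩ := Sym2.mem_iff_exists.1 hbq0
  obtain ⟨hq0e, v', hv', hsub0⟩ := hM1 _ hq0
  have hv'' : v' = v := hv'
  subst hv''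
  have hu : u ∈ K4set G v' := hsub0 u (Sym2.mem_mk_right _ _)
  have huinl : u ≠ Sum.inl v' := fun h => hinlq0 (h ▸ Sym2.mem_mk_right _ _)
  have hu' : ∃ e : G.edgeSet, v' ∈ (e : Sym2 V) ∧ u = Sum.inr e := by
    rcases hu with h | h
    · exact absurd h huinl
    · exact h
  obtain ⟨e, hve, rfl⟩ := hu'
  have heb : e ≠ b := by
    have := (SimpleGraph.mem_edgeSet _).1 hq0e
    rintro rfl; exact this.1 rfl
  have hea : e ≠ a := fun h => hinraq0 (h ▸ Sym2.mem_mk_right _ _)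
  have hec : e = c := by rcases hcl e hve with rfl | rfl | rfl <;> tauto
  subst hec
  have hQ : s(Sum.inr b, Sum.inr e) ∈ M := hq0
  apply Set.Subset.antisymm
  · intro r hr
    by_contra hrne
    simp only [MkPM, Set.mem_insert_iff, Set.mem_singleton_iff, not_or] at hrne
    obtain ⟨hredge, w', hw', hsubr⟩ := hM1 r hr
    have hw'' : w' = v' := hw'
    subst hw''
    have hx : r.out.1 ∈ r := Sym2.out_fst_mem r
    have hxP : r.out.1 ∉ P := hM2 r hr P hPa hrne.1 _ hx
    have hxQ : r.out.1 ∉ s(Sum.inr b, Sum.inr e) := hM2 r hr _ hQ hrne.2 _ hx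
    have := hsubr _ hx
    rcases this with h | ⟨f, hvf, h⟩
    · exact hxP (h ▸ Sym2.mem_mk_left _ _)
    · rcases hcl f hvf with rfl | rfl | rfl
      · exact hxP (h ▸ Sym2.mem_mk_right _ _)
      · exact hxQ (h ▸ Sym2.mem_mk_left _ _)
      · exact hxQ (h ▸ Sym2.mem_mk_right _ _)
  · rintro r (rfl | rfl)
    · exact hPa
    · exact hQ

lemma coverM_singleton_cases [Fintype V] [DecidableEq V] (G : SimpleGraph V)
    [DecidableRel G.Adj] (hcubic : G.IsRegularOfDegree 3) (v : V) :
    ∃ a b c : G.edgeSet, a ≠ b ∧ a ≠ c ∧ b ≠ c ∧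
      {M | CoverM G {v} M} =
        {MkPM G v a b c, MkPM G v b a c, MkPM G v c a b} := by
  obtain ⟨a, b, c, hab, hac, hbc, hva, hvb, hvc, hcl⟩ := threeEdges G hcubic v
  refine ⟨a, b, c, hab, hac, hbc, ?_⟩
  ext M
  simp only [Set.mem_setOf_eq, Set.mem_insert_iff, Set.mem_singleton_iff]
  constructor
  · intro hM
    obtain ⟨p0, hp0, hvp0⟩ := hM.2.2 v rfl (Sum.inl v) inl_mem_K4set'
    obtain ⟨t, rfl⟩ := Sym2.mem_iff_exists.1 hvp0
    obtain ⟨hp0e, w, hw, hsub⟩ := hM.1 _ hp0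
    have hw' : w = v := hw
    subst hw'
    have ht : t ∈ K4set G w := hsub t (Sym2.mem_mk_right _ _)
    have htinl : t ≠ Sum.inl w := by
      have := (SimpleGraph.mem_edgeSet _).1 hp0e
      intro h; rw [h] at this; exact this
    have ht' : ∃ e : G.edgeSet, w ∈ (e : Sym2 V) ∧ t = Sum.inr e := by
      rcases ht with h | h
      · exact absurd h htinl
      · exact h
    obtain ⟨x, hwx, rfl⟩ := ht'
    rcases hcl x hwx with rfl | rfl | rfl
    · exact Or.inl (coverM_singleton_eq_pair G hab hac hbc hcl hM hvb hp0)
    · refine Or.inr (Or.inl (coverM_singleton_eq_pair G (Ne.symm hab) hbc hac ?_ hM hva hp0))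
      intro e he; rcases hcl e he with rfl | rfl | rfl <;> tauto
    · refine Or.inr (Or.inr (coverM_singleton_eq_pair G (Ne.symm hac) (Ne.symm hbc) hab ?_ hM hva hp0))
      intro e he; rcases hcl e he with rfl | rfl | rfl <;> tauto
  · rintro (rfl | rfl | rfl)
    · exact mkPM_mem_coverM G hab hac hbc hva hvb hvc hcl
    · refine mkPM_mem_coverM G (Ne.symm hab) hbc hac hvb hva hvc ?_
      intro e he; rcases hcl e he with rfl | rfl | rfl <;> tauto
    · refine mkPM_mem_coverM G (Ne.symm hac) (Ne.symm hbc) hab hvc hva hvb ?_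
      intro e he; rcases hcl e he with rfl | rfl | rfl <;> tauto

lemma mkPM_ne (G : SimpleGraph V) {v : V} {a b c a' b' c' : G.edgeSet} (h : a ≠ a') :
    MkPM G v a b c ≠ MkPM G v a' b' c' := by
  intro heq
  have h1 : (s(Sum.inl v, Sum.inr a) : Sym2 (V ⊕ G.edgeSet)) ∈ MkPM G v a' b' c' := by
    rw [← heq]; exact Or.inl rfl
  rcases h1 with h1 | h1
  · rw [Sym2.eq_iff] at h1
    rcases h1 with ⟨_, h1⟩ | ⟨h1, _⟩ <;> simp_all
  · rw [Set.mem_singleton_iff, Sym2.eq_iff] at h1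
    rcases h1 with ⟨h1, _⟩ | ⟨h1, _⟩ <;> simp_all

lemma cardK4single [Fintype V] [DecidableEq V] (G : SimpleGraph V)
    [DecidableRel G.Adj] (hcubic : G.IsRegularOfDegree 3) (v : V) :
    Nat.card {M | CoverM G {v} M} = 3 := by
  obtain ⟨a, b, c, hab, hac, hbc, hset⟩ := coverM_singleton_cases G hcubic v
  rw [Nat.card_coe_set_eq, hset]
  have h1 : MkPM G v a b c ∉ ({MkPM G v b a c, MkPM G v c a b} :
      Set (Set (Sym2 (V ⊕ G.edgeSet)))) := by
    simp only [Set.mem_insert_iff, Set.mem_singleton_iff]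
    push_neg
    exact ⟨mkPM_ne G hab, mkPM_ne G hac⟩
  have h2 : MkPM G v b a c ∉ ({MkPM G v c a b} :
      Set (Set (Sym2 (V ⊕ G.edgeSet)))) := by
    simp only [Set.mem_singleton_iff]
    exact mkPM_ne G hbc
  rw [Set.ncard_insert_of_notMem h1, Set.ncard_insert_of_notMem h2, Set.ncard_singleton]

lemma K4disj {G : SimpleGraph V} {v w : V} (hvw : v ≠ w)
    (h : ∀ e : G.edgeSet, v ∈ (e : Sym2 V) → w ∈ (e : Sym2 V) → False)
    {x : V ⊕ G.edgeSet} (hxv : x ∈ K4set G v) (hxw : x ∈ K4set G w) : False := by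
  rcases hxv with rfl | ⟨e, hve, rfl⟩
  · rcases hxw with h' | ⟨e, _, h'⟩
    · exact hvw (Sum.inl.inj h')
    · exact absurd h' (by simp)
  · rcases hxw with h' | ⟨f, hwf, h'⟩
    · exact absurd h' (by simp)
    · exact h e hve (Sum.inr.inj h' ▸ hwf)

lemma coverM_insert_equiv [DecidableEq V] (G : SimpleGraph V) (a : V) (s : Finset V) (ha : a ∉ s)
    (hdisj : ∀ v ∈ insert a s, ∀ w ∈ insert a s, v ≠ w →
      ∀ e : G.edgeSet, v ∈ (e : Sym2 V) → w ∈ (e : Sym2 V) → False) :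
    Nat.card {M | CoverM G (↑(insert a s) : Set V) M} =
      Nat.card {M | CoverM G ({a} : Set V) M} * Nat.card {M | CoverM G (↑s : Set V) M} := by
  classical
  set InA : Set (Sym2 (V ⊕ G.edgeSet)) := {p | ∀ x ∈ p, x ∈ K4set G a} with hInA
  have hKD : ∀ w ∈ s, ∀ x : V ⊕ G.edgeSet, x ∈ K4set G a → x ∈ K4set G w → False := by
    intro w hw x hxa hxw
    have haw : a ≠ w := fun h => ha (h ▸ hw)
    exact K4disj haw (hdisj a (Finset.mem_insert_self a s) w
      (Finset.mem_insert_of_mem hw) haw) hxa hxw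
  -- not in InA if inside a K4 of s
  have hnotInA : ∀ (p : Sym2 (V ⊕ G.edgeSet)) (w : V), w ∈ s →
      (∀ x ∈ p, x ∈ K4set G w) → p ∉ InA := by
    intro p w hw hsub hpInA
    exact hKD w hw p.out.1 (hpInA _ (Sym2.out_fst_mem p)) (hsub _ (Sym2.out_fst_mem p))
  have proof1 : ∀ M, CoverM G (↑(insert a s) : Set V) M → CoverM G ({a} : Set V) (M ∩ InA) := by
    rintro M ⟨hM1, hM2, hM3⟩
    refine ⟨?_, ?_, ?_⟩
    · rintro p ⟨hpM, hpA⟩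
      exact ⟨(hM1 p hpM).1, a, rfl, hpA⟩
    · exact fun p hp q hq => hM2 p hp.1 q hq.1
    · rintro v (rfl : v = a) x hx
      obtain ⟨p, hpM, hxp⟩ := hM3 v (by exact_mod_cast Finset.mem_insert_self v s) x hx
      refine ⟨p, ⟨hpM, ?_⟩, hxp⟩
      obtain ⟨_, w, hw, hsub⟩ := hM1 p hpM
      have hw' : w ∈ insert v s := by exact_mod_cast hw
      rcases Finset.mem_insert.1 hw' with rfl | hws
      · exact hsub
      · exact absurd (hsub x hxp) (fun h => hKD w hws x hx h)
  have proof2 : ∀ M, CoverM G (↑(insert a s) : Set V) M → CoverM G (↑s : Set V) (M \ InA) := by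
    rintro M ⟨hM1, hM2, hM3⟩
    refine ⟨?_, ?_, ?_⟩
    · rintro p ⟨hpM, hpA⟩
      refine ⟨(hM1 p hpM).1, ?_⟩
      obtain ⟨_, w, hw, hsub⟩ := hM1 p hpM
      have hw' : w ∈ insert a s := by exact_mod_cast hw
      rcases Finset.mem_insert.1 hw' with rfl | hws
      · exact absurd hsub hpA
      · exact ⟨w, by exact_mod_cast hws, hsub⟩
    · exact fun p hp q hq => hM2 p hp.1 q hq.1
    · intro v hv x hx
      have hvs : v ∈ s := by exact_mod_cast hv
      obtain ⟨p, hpM, hxp⟩ := hM3 v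
        (by exact_mod_cast Finset.mem_insert_of_mem hvs) x hx
      refine ⟨p, ⟨hpM, ?_⟩, hxp⟩
      intro hpA
      exact hKD v hvs x (hpA x hxp) hx
  have proof3 : ∀ M1 M2, CoverM G ({a} : Set V) M1 → CoverM G (↑s : Set V) M2 →
      CoverM G (↑(insert a s) : Set V) (M1 ∪ M2) := by
    rintro M1 M2 ⟨h11, h12, h13⟩ ⟨h21, h22, h23⟩
    have hsubA : ∀ p ∈ M1, ∀ x ∈ p, x ∈ K4set G a := by
      intro p hp
      obtain ⟨_, v, (rfl : v = a), hsub⟩ := h11 p hp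
      exact hsub
    have hcross : ∀ p ∈ M1, ∀ q ∈ M2, ∀ x, x ∈ p → x ∉ q := by
      intro p hp q hq x hxp hxq
      obtain ⟨_, w, hw, hsubw⟩ := h21 q hq
      exact hKD w (by exact_mod_cast hw) x (hsubA p hp x hxp) (hsubw x hxq)
    refine ⟨?_, ?_, ?_⟩
    · rintro p (hp | hp)
      · exact ⟨(h11 p hp).1, a, by exact_mod_cast Finset.mem_insert_self a s, hsubA p hp⟩
      · obtain ⟨he, w, hw, hsub⟩ := h21 p hp
        have hws : w ∈ s := by exact_mod_cast hw
        refine ⟨he, w, ?_, hsub⟩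
        exact_mod_cast Finset.mem_insert_of_mem hws
    · rintro p (hp | hp) q (hq | hq) hne x hxp hxq
      · exact h12 p hp q hq hne x hxp hxq
      · exact hcross p hp q hq x hxp hxq
      · exact hcross q hq p hp x hxq hxp
      · exact h22 p hp q hq hne x hxp hxq
    · intro v hv x hx
      have hv' : v ∈ insert a s := by exact_mod_cast hv
      rcases Finset.mem_insert.1 hv' with rfl | hvs
      · obtain ⟨p, hp, hxp⟩ := h13 v rfl x hx
        exact ⟨p, Or.inl hp, hxp⟩
      · obtain ⟨p, hp, hxp⟩ := h23 v (by exact_mod_cast hvs) x hx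
        exact ⟨p, Or.inr hp, hxp⟩
  have e : {M | CoverM G (↑(insert a s) : Set V) M} ≃
      {M | CoverM G ({a} : Set V) M} × {M | CoverM G (↑s : Set V) M} :=
    { toFun := fun M => (⟨M.1 ∩ InA, proof1 M.1 M.2⟩, ⟨M.1 \ InA, proof2 M.1 M.2⟩)
      invFun := fun Mp => ⟨Mp.1.1 ∪ Mp.2.1, proof3 _ _ Mp.1.2 Mp.2.2⟩
      left_inv := by
        rintro ⟨M, hM⟩
        simp only [Subtype.mk.injEq]
        exact Set.inter_union_diff M InA
      right_inv := by
        rintro ⟨⟨M1, hM1⟩, ⟨M2, hM2⟩⟩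
        have hM1A : M1 ⊆ InA := by
          intro p hp
          obtain ⟨_, v, (rfl : v = a), hsub⟩ := hM1.1 p hp
          exact hsub
        have hM2A : ∀ p ∈ M2, p ∉ InA := by
          intro p hp
          obtain ⟨_, w, hw, hsub⟩ := hM2.1 p hp
          exact hnotInA p w (by exact_mod_cast hw) hsub
        have e1 : (M1 ∪ M2) ∩ InA = M1 := by
          ext p
          constructor
          · rintro ⟨hp | hp, hpA⟩
            · exact hp
            · exact absurd hpA (hM2A p hp)
          · intro hp
            exact ⟨Or.inl hp, hM1A hp⟩
        have e2 : (M1 ∪ M2) \ InA = M2 := by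
          ext p
          constructor
          · rintro ⟨hp | hp, hpA⟩
            · exact absurd (hM1A hp) hpA
            · exact hp
          · intro hp
            exact ⟨Or.inr hp, hM2A p hp⟩
        simp only [Prod.mk.injEq, Subtype.mk.injEq]
        exact ⟨e1, e2⟩ }
  rw [Nat.card_congr e, Nat.card_prod]

lemma cardCoverM [Fintype V] [DecidableEq V] (G : SimpleGraph V) [DecidableRel G.Adj]
    (hcubic : G.IsRegularOfDegree 3) (B : Finset V)
    (hdisj : ∀ v ∈ B, ∀ w ∈ B, v ≠ w →
      ∀ e : G.edgeSet, v ∈ (e : Sym2 V) → w ∈ (e : Sym2 V) → False) :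
    Nat.card {M | CoverM G (↑B : Set V) M} = 3 ^ B.card := by
  classical
  induction B using Finset.induction_on with
  | empty =>
    have hset : {M | CoverM G (↑(∅ : Finset V) : Set V) M} =
        {(∅ : Set (Sym2 (V ⊕ G.edgeSet)))} := by
      ext M
      simp only [Set.mem_setOf_eq, Set.mem_singleton_iff]
      constructor
      · rintro ⟨h1, _, _⟩
        rw [Set.eq_empty_iff_forall_notMem]
        intro p hp
        obtain ⟨_, v, hv, _⟩ := h1 p hp
        simp at hv
      · rintro rfl
        exact ⟨fun p hp => hp.elim, fun p hp => hp.elim, fun v hv => by simp at hv⟩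
    rw [hset, Nat.card_coe_set_eq, Set.ncard_singleton]
    simp
  | @insert a s ha ih =>
    have hds : ∀ v ∈ s, ∀ w ∈ s, v ≠ w →
        ∀ e : G.edgeSet, v ∈ (e : Sym2 V) → w ∈ (e : Sym2 V) → False := by
      intro v hv w hw
      exact hdisj v (Finset.mem_insert_of_mem hv) w (Finset.mem_insert_of_mem hw)
    rw [coverM_insert_equiv G a s ha hdisj, cardK4single G hcubic a, ih hds,
      Finset.card_insert_of_notMem ha, pow_succ, mul_comm]

lemma MNstar_eq (G : SimpleGraph V) (N : Set (Sym2 G.edgeSet)) :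
    MNstar G N = {P | ∃ M, CoverM G (badSet G N) M ∧ P = matchEdges G N ∪ M} := by
  ext P
  constructor
  · rintro ⟨M, h1, h2, h3, h4⟩; exact ⟨M, ⟨h1, h2, h3⟩, h4⟩
  · rintro ⟨M, ⟨h1, h2, h3⟩, h4⟩; exact ⟨M, h1, h2, h3, h4⟩

/-- a vertex hosting a member of `N` is not bad. -/
lemma not_bad_of_host {G : SimpleGraph V} {N : Set (Sym2 G.edgeSet)} {v : V}
    {e1 e2 : G.edgeSet} (h : s(e1, e2) ∈ N)
    (h1 : v ∈ (e1 : Sym2 V)) (h2 : v ∈ (e2 : Sym2 V)) : v ∉ badSet G N := by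
  intro hbad
  refine hbad _ h ?_
  intro x hx
  rcases Sym2.mem_iff.1 hx with rfl | rfl
  · exact h1
  · exact h2

/-- The recovery predicate: `q` can be read off from `P`. -/
def Phi (G : SimpleGraph V) (P : Set (Sym2 (V ⊕ G.edgeSet))) (q : Sym2 G.edgeSet) : Prop :=
  ∃ (v : V) (e1 e2 e3 : G.edgeSet), q = s(e1, e2) ∧
    v ∈ (e1 : Sym2 V) ∧ v ∈ (e2 : Sym2 V) ∧ v ∈ (e3 : Sym2 V) ∧
    e1 ≠ e2 ∧ e3 ≠ e1 ∧ e3 ≠ e2 ∧ s(Sum.inl v, Sum.inr e3) ∈ P ∧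
    ∀ f g : G.edgeSet, f ≠ g → v ∈ (f : Sym2 V) → v ∈ (g : Sym2 V) →
      s(Sum.inr f, Sum.inr g) ∉ P

lemma mem_iff_phi [Fintype V] [DecidableEq V] (G : SimpleGraph V) [DecidableRel G.Adj]
    (hcubic : G.IsRegularOfDegree 3) {N : Set (Sym2 G.edgeSet)}
    (hN : IsPerfMatchSet (lineGraph G) N) {P : Set (Sym2 (V ⊕ G.edgeSet))}
    (hP : P ∈ MNstar G N) (q : Sym2 G.edgeSet) : q ∈ N ↔ Phi G P q := by
  rw [MNstar_eq] at hP
  obtain ⟨M, hM, rfl⟩ := hP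
  obtain ⟨hM1, hM2, hM3⟩ := hM
  constructor
  · -- forward
    intro hq
    revert hq
    induction q using Sym2.ind with | _ e1 e2 => ?_
    intro hq
    have hadj : (lineGraph G).Adj e1 e2 := (lineGraph G).mem_edgeSet.1 (hN.1 hq)
    obtain ⟨hne, v, h1, h2⟩ := lineGraph_adj.1 hadj
    have hgood : v ∉ badSet G N := not_bad_of_host hq h1 h2
    obtain ⟨e3, h3, h31, h32, _⟩ := thirdEdge G hcubic hne h1 h2
    refine ⟨v, e1, e2, e3, rfl, h1, h2, h3, hne, h31, h32,
      Or.inl ⟨v, e1, e2, e3, hq, h1, h2, h3, h31, h32, rfl⟩, ?_⟩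
    intro f g hfg hvf hvg hmem
    rcases hmem with hmem | hmem
    · obtain ⟨u, f1, f2, f3, _, _, _, _, _, _, heq⟩ := hmem
      rw [Sym2.eq_iff] at heq
      rcases heq with ⟨h', _⟩ | ⟨_, h'⟩ <;> exact absurd h' (by simp)
    · obtain ⟨_, w, hw, hsub⟩ := hM1 _ hmem
      have hwf : w ∈ (f : Sym2 V) :=
        inr_mem_K4set.1 (hsub _ (Sym2.mem_mk_left _ _))
      have hwg : w ∈ (g : Sym2 V) :=
        inr_mem_K4set.1 (hsub _ (Sym2.mem_mk_right _ _))
      by_cases hvw : v = w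
      · exact hgood (hvw ▸ hw)
      · have hf : (f : Sym2 V) = s(v, w) := (Sym2.mem_and_mem_iff hvw).1 ⟨hvf, hwf⟩
        have hg : (g : Sym2 V) = s(v, w) := (Sym2.mem_and_mem_iff hvw).1 ⟨hvg, hwg⟩
        exact hfg (Subtype.ext (hf.trans hg.symm))
  · -- backward
    rintro ⟨v, e1, e2, e3, rfl, h1, h2, h3, hne, h31, h32, hin, hnoinr⟩
    rcases hin with hin | hin
    · -- comes from matchEdges
      obtain ⟨u, f1, f2, f3, hf12N, hu1, hu2, hu3, hf31, hf32, heq⟩ := hin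
      rw [Sym2.eq_iff] at heq
      rcases heq with ⟨hvu, he3f3⟩ | ⟨h', _⟩
      swap
      · exact absurd h' (by simp)
      have hvu' : v = u := Sum.inl.inj hvu
      have he3f3' : e3 = f3 := Sum.inr.inj he3f3
      subst hvu'; subst he3f3'
      -- classify the edges at v
      obtain ⟨e3', h3', h31', h32', hcl⟩ := thirdEdge G hcubic hne h1 h2
      have he33 : e3 = e3' := by
        rcases hcl e3 h3 with h | h | h
        · exact absurd h h31
        · exact absurd h h32
        · exact h
      subst he33
      have hf1 : f1 = e1 ∨ f1 = e2 := by
        rcases hcl f1 hu1 with h | h | h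
        · exact Or.inl h
        · exact Or.inr h
        · exact absurd h.symm hf31
      have hf2 : f2 = e1 ∨ f2 = e2 := by
        rcases hcl f2 hu2 with h | h | h
        · exact Or.inl h
        · exact Or.inr h
        · exact absurd h.symm hf32
      have hf12 : f1 ≠ f2 := (lineGraph_adj.1 ((lineGraph G).mem_edgeSet.1 (hN.1 hf12N))).1
      rcases hf1 with rfl | rfl <;> rcases hf2 with rfl | rfl
      · exact absurd rfl hf12
      · exact hf12N
      · rw [Sym2.eq_swap]; exact hf12N
      · exact absurd rfl hf12
    · -- comes from M : derive a contradiction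
      exfalso
      obtain ⟨_, w, hwbad, hsub⟩ := hM1 _ hin
      have hvw : v = w := inl_mem_K4set.1 (hsub _ (Sym2.mem_mk_left _ _))
      subst hvw
      -- v is bad; find the inr-inr edge of the K4 at v
      obtain ⟨q0, hq0, hq0mem⟩ := hM3 v hwbad (Sum.inr e1) (inr_mem_K4set.2 h1)
      have hq0ne : q0 ≠ s(Sum.inl v, Sum.inr e3) := by
        rintro rfl
        rcases Sym2.mem_iff.1 hq0mem with h | h
        · exact absurd h (by simp)
        · exact h31 (Sum.inr.inj h).symm
      have hinl : Sum.inl v ∉ q0 :=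
        hM2 _ hin q0 hq0 (Ne.symm hq0ne) _ (Sym2.mem_mk_left _ _)
      obtain ⟨u, rfl⟩ := Sym2.mem_iff_exists.1 hq0mem
      obtain ⟨hq0e, w0, hw0bad, hsub0⟩ := hM1 _ hq0
      have hw0e1 : w0 ∈ (e1 : Sym2 V) :=
        inr_mem_K4set.1 (hsub0 _ (Sym2.mem_mk_left _ _))
      have hw0v : w0 = v := by
        by_contra hne'
        exact badDisjoint G hN hw0bad hwbad hne' hw0e1 h1
      subst hw0v
      have hu : u ∈ K4set G w0 := hsub0 _ (Sym2.mem_mk_right _ _)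
      have hu' : ∃ g : G.edgeSet, w0 ∈ (g : Sym2 V) ∧ u = Sum.inr g := by
        rcases hu with h | h
        · exact absurd (h ▸ Sym2.mem_mk_right _ _ : Sum.inl w0 ∈ s(Sum.inr e1, u)) hinl
        · exact h
      obtain ⟨g, hwg, rfl⟩ := hu'
      have he1g : e1 ≠ g := ((SimpleGraph.mem_edgeSet _).1 hq0e).1
      exact hnoinr e1 g he1g h1 hwg (Or.inr hq0)

lemma host_exists {G : SimpleGraph V} (p : Sym2 G.edgeSet)
    (hp : p ∈ (lineGraph G).edgeSet) : ∃ v : V, ∀ x ∈ p, v ∈ (x : Sym2 V) := by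
  induction p using Sym2.ind with | _ e f => ?_
  obtain ⟨hne, v, h1, h2⟩ := lineGraph_adj.1 ((lineGraph G).mem_edgeSet.1 hp)
  refine ⟨v, fun x hx => ?_⟩
  rcases Sym2.mem_iff.1 hx with rfl | rfl
  · exact h1
  · exact h2

lemma host_unique_vertex {G : SimpleGraph V} {p : Sym2 G.edgeSet}
    (hp : p ∈ (lineGraph G).edgeSet) {v w : V}
    (hv : ∀ x ∈ p, v ∈ (x : Sym2 V)) (hw : ∀ x ∈ p, w ∈ (x : Sym2 V)) : v = w := by
  by_contra hne
  revert hp hv hw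
  induction p using Sym2.ind with | _ e f => ?_
  intro hp hv hw
  have hef : e ≠ f := (lineGraph_adj.1 ((lineGraph G).mem_edgeSet.1 hp)).1
  have he : (e : Sym2 V) = s(v, w) := (Sym2.mem_and_mem_iff hne).1
    ⟨hv e (Sym2.mem_mk_left _ _), hw e (Sym2.mem_mk_left _ _)⟩
  have hf : (f : Sym2 V) = s(v, w) := (Sym2.mem_and_mem_iff hne).1
    ⟨hv f (Sym2.mem_mk_right _ _), hw f (Sym2.mem_mk_right _ _)⟩
  exact hef (Subtype.ext (he.trans hf.symm))

lemma badCard [Fintype V] [DecidableEq V] (G : SimpleGraph V) [DecidableRel G.Adj]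
    (hcubic : G.IsRegularOfDegree 3) {N : Set (Sym2 G.edgeSet)}
    (hN : IsPerfMatchSet (lineGraph G) N) :
    4 * (badSet G N).ncard = Fintype.card V := by
  classical
  set NF : Finset (Sym2 G.edgeSet) := (Set.toFinite N).toFinset with hNF
  have hNFmem : ∀ p, p ∈ NF ↔ p ∈ N := fun p => Set.Finite.mem_toFinset _
  -- step (i) : 2 * NF.card = number of edges of G
  have hstep1 : NF.card * 2 = Fintype.card G.edgeSet := by
    have hcover : (Finset.univ : Finset G.edgeSet) =
        NF.biUnion (fun p => Finset.univ.filter (· ∈ p)) := by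
      ext e
      simp only [Finset.mem_univ, Finset.mem_biUnion, Finset.mem_filter, true_iff, true_and]
      obtain ⟨p, hp, hep⟩ := hN.2.2 e
      exact ⟨p, (hNFmem p).2 hp, hep⟩
    have hdisj : ∀ p ∈ NF, ∀ q ∈ NF, p ≠ q →
        Disjoint (Finset.univ.filter (· ∈ p)) (Finset.univ.filter (· ∈ q)) := by
      intro p hp q hq hne
      rw [Finset.disjoint_left]
      intro x hx hx'
      exact hN.2.1 p ((hNFmem p).1 hp) q ((hNFmem q).1 hq) hne x
        (Finset.mem_filter.1 hx).2 (Finset.mem_filter.1 hx').2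
    have hcard2 : ∀ p ∈ NF, (Finset.univ.filter (· ∈ p)).card = 2 := by
      intro p hp
      have hpe : p ∈ (lineGraph G).edgeSet := hN.1 ((hNFmem p).1 hp)
      have hnd : ¬ p.IsDiag := SimpleGraph.not_isDiag_of_mem_edgeSet _ hpe
      revert hnd
      induction p using Sym2.ind with | _ e f => ?_
      intro hnd
      have hef : e ≠ f := by simpa using hnd
      have : (Finset.univ.filter (· ∈ (s(e, f) : Sym2 G.edgeSet))) = {e, f} := by
        ext x
        simp [Sym2.mem_iff]
      rw [this, Finset.card_insert_of_notMem (by simp [hef]), Finset.card_singleton]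
    have := Finset.card_biUnion hdisj
    rw [← hcover, Finset.sum_congr rfl hcard2, Finset.sum_const, smul_eq_mul] at this
    rw [← this]
    simp [Finset.card_univ]
  -- step (ii) : #good = NF.card
  set goodF : Finset V := Finset.univ.filter (fun v => ¬ v ∈ badSet G N) with hgoodF
  have hex : ∀ v ∈ goodF, ∃ p, p ∈ N ∧ ∀ x ∈ p, v ∈ (x : Sym2 V) := by
    intro v hv
    have : ¬ v ∈ badSet G N := (Finset.mem_filter.1 hv).2
    simp only [badSet, Set.mem_setOf_eq] at this
    push_neg at this
    exact this
  have hstep2 : goodF.card = NF.card := by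
    refine Finset.card_bij (fun v hv => (hex v hv).choose) ?_ ?_ ?_
    · intro v hv
      exact (hNFmem _).2 (hex v hv).choose_spec.1
    · intro v hv w hw heq
      have h1 := (hex v hv).choose_spec
      have h2 := (hex w hw).choose_spec
      have heq' : (hex v hv).choose = (hex w hw).choose := heq
      refine host_unique_vertex (hN.1 h1.1) h1.2 ?_
      rw [heq']
      exact h2.2
    · intro p hp
      have hpN : p ∈ N := (hNFmem p).1 hp
      obtain ⟨v, hhost⟩ := host_exists p (hN.1 hpN)
      have hvgood : v ∈ goodF := by
        refine Finset.mem_filter.2 ⟨Finset.mem_univ v, fun hbad => ?_⟩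
        exact hbad p hpN hhost
      refine ⟨v, hvgood, ?_⟩
      have h1 := (hex v hvgood).choose_spec
      exact hostUnique G hcubic hN h1.1 hpN h1.2 hhost
  -- step (iii) : #bad + #good = n
  set badF : Finset V := Finset.univ.filter (fun v => v ∈ badSet G N) with hbadF
  have hstep3 : badF.card + goodF.card = Fintype.card V := by
    rw [hbadF, hgoodF, Finset.card_filter_add_card_filter_not]
    rfl
  have hbadncard : (badSet G N).ncard = badF.card := by
    rw [Set.ncard_eq_toFinset_card']
    congr 1
    ext v
    simp [hbadF]
  -- step (iv) : handshake
  have hhand : ∑ v : V, G.degree v = 2 * G.edgeFinset.card :=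
    SimpleGraph.sum_degrees_eq_twice_card_edges G
  have hsum3 : ∑ v : V, G.degree v = Fintype.card V * 3 := by
    rw [Finset.sum_congr rfl (fun v _ => hcubic v), Finset.sum_const, smul_eq_mul,
      Finset.card_univ]
  have hedge : G.edgeFinset.card = Fintype.card G.edgeSet := SimpleGraph.edgeFinset_card
  rw [hbadncard]
  omega

lemma M_notin_matchEdges {G : SimpleGraph V} {N : Set (Sym2 G.edgeSet)}
    {M : Set (Sym2 (V ⊕ G.edgeSet))} (hM : CoverM G (badSet G N) M)
    {p : Sym2 (V ⊕ G.edgeSet)} (hp : p ∈ M) : p ∉ matchEdges G N := by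
  rintro ⟨u, f1, f2, f3, hf12, hu1, hu2, hu3, _, _, rfl⟩
  obtain ⟨_, w, hwbad, hsub⟩ := hM.1 _ hp
  have : u = w := inl_mem_K4set.1 (hsub _ (Sym2.mem_mk_left _ _))
  exact not_bad_of_host hf12 hu1 hu2 (this ▸ hwbad)

lemma MNstar_ncard [Fintype V] [DecidableEq V] (G : SimpleGraph V) [DecidableRel G.Adj]
    (hcubic : G.IsRegularOfDegree 3) {N : Set (Sym2 G.edgeSet)}
    (hN : IsPerfMatchSet (lineGraph G) N) :
    (MNstar G N).ncard = 3 ^ (Fintype.card V / 4) := by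
  classical
  set B : Finset V := (Set.toFinite (badSet G N)).toFinset with hB
  have hBcoe : (↑B : Set V) = badSet G N := Set.Finite.coe_toFinset _
  have hdisjB : ∀ v ∈ B, ∀ w ∈ B, v ≠ w →
      ∀ e : G.edgeSet, v ∈ (e : Sym2 V) → w ∈ (e : Sym2 V) → False := by
    intro v hv w hw hvw e hev hew
    have hv' : v ∈ badSet G N := (Set.Finite.mem_toFinset _).1 hv
    have hw' : w ∈ badSet G N := (Set.Finite.mem_toFinset _).1 hw
    exact badDisjoint G hN hv' hw' hvw hev hew
  have hcount : Nat.card {M | CoverM G (badSet G N) M} = 3 ^ B.card := by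
    rw [← hBcoe]
    exact cardCoverM G hcubic B hdisjB
  have himg : MNstar G N =
      (fun M => matchEdges G N ∪ M) '' {M | CoverM G (badSet G N) M} := by
    rw [MNstar_eq]
    ext P
    simp only [Set.mem_image, Set.mem_setOf_eq]
    constructor
    · rintro ⟨M, hM, rfl⟩; exact ⟨M, hM, rfl⟩
    · rintro ⟨M, hM, rfl⟩; exact ⟨M, hM, rfl⟩
  have hinj : Set.InjOn (fun M => matchEdges G N ∪ M) {M | CoverM G (badSet G N) M} := by
    intro M1 h1 M2 h2 heq
    simp only at heq
    ext p
    constructor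
    · intro hp
      have : p ∈ matchEdges G N ∪ M2 := heq ▸ Or.inr hp
      rcases this with h | h
      · exact absurd h (M_notin_matchEdges h1 hp)
      · exact h
    · intro hp
      have : p ∈ matchEdges G N ∪ M1 := heq ▸ Or.inr hp
      rcases this with h | h
      · exact absurd h (M_notin_matchEdges h2 hp)
      · exact h
  have hcard4 : Fintype.card V / 4 = B.card := by
    have h4 := badCard G hcubic hN
    have : (badSet G N).ncard = B.card := by
      rw [← hBcoe, Set.ncard_coe_finset]
    omega
  rw [himg, Set.ncard_image_of_injOn hinj, ← Nat.card_coe_set_eq, hcount, hcard4]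

/-- Let `G` be a connected cubic graph with `n` vertices and an even
number of edges.  For distinct perfect matchings `N, N'` of `L(G)` the families `M_N*`
and `M_{N'}*` of perfect matchings of `M(G)` are disjoint; moreover each family `M_N*`
has exactly `3^(n/4)` elements. -/
theorem MNstar_disjoint_and_card {V : Type*} [Fintype V] [DecidableEq V]
    (G : SimpleGraph V) [DecidableRel G.Adj]
    (hconn : G.Connected) (hcubic : G.IsRegularOfDegree 3)
    (heven : Even G.edgeFinset.card) :
    (∀ N N' : Set (Sym2 G.edgeSet), IsPerfMatchSet (lineGraph G) N →
      IsPerfMatchSet (lineGraph G) N' → N ≠ N' →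
      Disjoint (MNstar G N) (MNstar G N')) ∧
    (∀ N : Set (Sym2 G.edgeSet), IsPerfMatchSet (lineGraph G) N →
      (MNstar G N).ncard = 3 ^ (Fintype.card V / 4)) := by
  constructor
  · intro N N' hN hN' hne
    rw [Set.disjoint_left]
    intro P hP hP'
    apply hne
    ext q
    rw [mem_iff_phi G hcubic hN hP q, mem_iff_phi G hcubic hN' hP' q]
  · intro N hN
    exact MNstar_ncard G hcubic hN
end

section
/- Let G be a connected cubic simple graph with n vertices and m = 3n/2 edges, m even, and let M* be a perfect matching of the vertex-edge graph M(G). Let B be the set of vertices v of G such that the K4-subgraph G_v contains exactly one edge of M*; for each v ∈ B this unique edge joins the v-vertex v to one of its incident edges, say e_{v,3}, and let e_{v,1}, e_{v,2} be the other two edges of G incident to v. Then the set { {e_{v,1}, e_{v,2}} : v ∈ B } is a perfect matching of the line graph L(G). -/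
variable {V : Type*}

lemma unique_partner {W : Type*} {H : SimpleGraph W} {P : Set (Sym2 W)}
    (hP : IsPerfMatchSet H P) {x : W} {p q : Sym2 W}
    (hp : p ∈ P) (hq : q ∈ P) (hxp : x ∈ p) (hxq : x ∈ q) : p = q := by
  by_contra hne
  exact hP.2.1 p hp q hq hne x hxp hxq

lemma edge_shape {W : Type*} {H : SimpleGraph W} {p : Sym2 W}
    (hp : p ∈ H.edgeSet) {x : W} (hx : x ∈ p) :
    ∃ y, H.Adj x y ∧ p = s(x, y) := by
  revert hp hx
  induction p using Sym2.ind with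
  | _ a b =>
    intro hp hx
    rw [SimpleGraph.mem_edgeSet] at hp
    rcases Sym2.mem_iff.mp hx with rfl | rfl
    · exact ⟨b, hp, rfl⟩
    · exact ⟨a, hp.symm, Sym2.eq_swap⟩

lemma third_edge {V : Type*} [Fintype V] [DecidableEq V]
    (G : SimpleGraph V) [DecidableRel G.Adj]
    (hcubic : G.IsRegularOfDegree 3) (v : V) (e1 e2 : G.edgeSet)
    (h1 : v ∈ (e1 : Sym2 V)) (h2 : v ∈ (e2 : Sym2 V)) (hne : e1 ≠ e2) :
    ∃ e3 : G.edgeSet, v ∈ (e3 : Sym2 V) ∧ e3 ≠ e1 ∧ e3 ≠ e2 ∧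
      ∀ g : G.edgeSet, v ∈ (g : Sym2 V) → g = e1 ∨ g = e2 ∨ g = e3 := by
  classical
  set T : Finset G.edgeSet := Finset.univ.filter (fun e => v ∈ (e : Sym2 V)) with hT
  have hmemT : ∀ e : G.edgeSet, e ∈ T ↔ v ∈ (e : Sym2 V) := by
    intro e; simp [hT]
  have hcard : T.card = 3 := by
    rw [← hcubic v, ← SimpleGraph.card_incidenceFinset_eq_degree]
    refine Finset.card_bij (fun e _ => (e : Sym2 V)) ?_ ?_ ?_
    · intro e he
      rw [SimpleGraph.mem_incidenceFinset]
      exact ⟨e.2, (hmemT e).mp he⟩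
    · intro e he f hf hef
      exact Subtype.ext hef
    · intro g hg
      rw [SimpleGraph.mem_incidenceFinset] at hg
      exact ⟨⟨g, hg.1⟩, (hmemT _).mpr hg.2, rfl⟩
  have hsub : ({e1, e2} : Finset G.edgeSet) ⊆ T := by
    intro x hx
    rcases Finset.mem_insert.mp hx with rfl | hx
    · exact (hmemT _).mpr h1
    · rw [Finset.mem_singleton] at hx; subst hx; exact (hmemT _).mpr h2
  have hcard2 : ({e1, e2} : Finset G.edgeSet).card = 2 := by
    rw [Finset.card_insert_of_notMem (by simpa using hne), Finset.card_singleton]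
  have hsd : (T \ {e1, e2}).card = 1 := by
    rw [Finset.card_sdiff_of_subset hsub, hcard, hcard2]
  obtain ⟨e3, he3⟩ := Finset.card_eq_one.mp hsd
  have he3m : e3 ∈ T \ ({e1, e2} : Finset G.edgeSet) := by rw [he3]; exact Finset.mem_singleton_self _
  rw [Finset.mem_sdiff] at he3m
  have hne31 : e3 ≠ e1 := fun h => he3m.2 (by simp [h])
  have hne32 : e3 ≠ e2 := fun h => he3m.2 (by simp [h])
  refine ⟨e3, (hmemT _).mp he3m.1, hne31, hne32, ?_⟩
  intro g hg
  have hsub3 : ({e1, e2, e3} : Finset G.edgeSet) ⊆ T := by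
    intro x hx
    rcases Finset.mem_insert.mp hx with rfl | hx
    · exact (hmemT _).mpr h1
    rcases Finset.mem_insert.mp hx with rfl | hx
    · exact (hmemT _).mpr h2
    · rw [Finset.mem_singleton] at hx; subst hx; exact he3m.1
  have hcard3 : ({e1, e2, e3} : Finset G.edgeSet).card = 3 := by
    rw [Finset.card_insert_of_notMem, Finset.card_insert_of_notMem, Finset.card_singleton]
    · simpa using hne32.symm
    · simp only [Finset.mem_insert, Finset.mem_singleton]
      push_neg
      exact ⟨hne, hne31.symm⟩
  have hTeq : T = ({e1, e2, e3} : Finset G.edgeSet) :=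
    (Finset.eq_of_subset_of_card_le hsub3 (by rw [hcard, hcard3])).symm
  have : g ∈ ({e1, e2, e3} : Finset G.edgeSet) := hTeq ▸ (hmemT g).mpr hg
  simpa using this

lemma vertex_partner {V : Type*} {G : SimpleGraph V} {P : Set (Sym2 (V ⊕ G.edgeSet))}
    (hP : IsPerfMatchSet (middleGraph G) P) (v : V) :
    ∃ e : G.edgeSet, v ∈ (e : Sym2 V) ∧ s(Sum.inl v, Sum.inr e) ∈ P := by
  obtain ⟨p, hp, hvp⟩ := hP.2.2 (Sum.inl v)
  obtain ⟨y, hadj, rfl⟩ := edge_shape (hP.1 hp) hvp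
  cases y with
  | inl u => exact absurd hadj (by simp [middleGraph])
  | inr e => exact ⟨e, hadj, hp⟩

lemma K4_mem_inr {G : SimpleGraph V} {v : V} {e : G.edgeSet}
    (h : v ∈ (e : Sym2 V)) : (Sum.inr e : V ⊕ G.edgeSet) ∈ K4set G v :=
  Or.inr ⟨e, h, rfl⟩

lemma K4_mem_inl {G : SimpleGraph V} {v : V} :
    (Sum.inl v : V ⊕ G.edgeSet) ∈ K4set G v := Or.inl rfl

lemma vedge_sub_K4 {G : SimpleGraph V} {v : V} {e : G.edgeSet}
    (h : v ∈ (e : Sym2 V)) :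
    ∀ a ∈ s(Sum.inl v, Sum.inr e), a ∈ K4set G v := by
  intro a ha
  rcases Sym2.mem_iff.mp ha with rfl | rfl
  · exact K4_mem_inl
  · exact K4_mem_inr h

lemma count_one {V : Type*} {G : SimpleGraph V} {P : Set (Sym2 (V ⊕ G.edgeSet))}
    (hP : IsPerfMatchSet (middleGraph G) P)
    {w : V} {f e3 h : G.edgeSet}
    (hwe3 : w ∈ (e3 : Sym2 V))
    (hall : ∀ g : G.edgeSet, w ∈ (g : Sym2 V) → g = f ∨ g = e3 ∨ g = h)
    (hm : s(Sum.inl w, Sum.inr e3) ∈ P)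
    {p' : Sym2 (V ⊕ G.edgeSet)} (hp' : p' ∈ P) (hfp' : Sum.inr f ∈ p')
    (hout : ¬ ∀ a ∈ p', a ∈ K4set G w) :
    {p ∈ P | ∀ a ∈ p, a ∈ K4set G w}.ncard = 1 := by
  have hset : {p ∈ P | ∀ a ∈ p, a ∈ K4set G w} = {s(Sum.inl w, Sum.inr e3)} := by
    ext q
    simp only [Set.mem_setOf_eq, Set.mem_singleton_iff]
    constructor
    · rintro ⟨hq, hsub⟩
      revert hq hsub
      induction q using Sym2.ind with
      | _ α β =>
        intro hq hsub
        have hadj : (middleGraph G).Adj α β := hP.1 hq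
        have hα := hsub α (Sym2.mem_mk_left α β)
        have hβ := hsub β (Sym2.mem_mk_right α β)
        rcases hα with rfl | ⟨g1, hg1, rfl⟩
        · exact unique_partner hP hq hm (Sym2.mem_mk_left _ _) (Sym2.mem_mk_left _ _)
        · rcases hβ with rfl | ⟨g2, hg2, rfl⟩
          · exact unique_partner hP hq hm (Sym2.mem_mk_right _ _) (Sym2.mem_mk_left _ _)
          · have hne12 : g1 ≠ g2 := hadj.1
            -- if either is e3, q equals the matching edge of w
            rcases hall g1 hg1 with rfl | rfl | rfl
            · -- g1 = f : contradiction with hout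
              have hq_eq : s(Sum.inr g1, Sum.inr g2) = p' :=
                unique_partner hP hq hp' (Sym2.mem_mk_left _ _) hfp'
              exact absurd (hq_eq ▸ hsub) hout
            · exact unique_partner hP hq hm (Sym2.mem_mk_left _ _) (Sym2.mem_mk_right _ _)
            · rcases hall g2 hg2 with rfl | rfl | rfl
              · have hq_eq : s(Sum.inr g1, Sum.inr g2) = p' :=
                  unique_partner hP hq hp' (Sym2.mem_mk_right _ _) hfp'
                exact absurd (hq_eq ▸ hsub) hout
              · exact unique_partner hP hq hm (Sym2.mem_mk_right _ _) (Sym2.mem_mk_right _ _)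
              · exact absurd rfl hne12
    · rintro rfl
      exact ⟨hm, vedge_sub_K4 hwe3⟩
  rw [hset]
  exact Set.ncard_singleton _

lemma partner_not_K4 {V : Type*} {G : SimpleGraph V} {P : Set (Sym2 (V ⊕ G.edgeSet))}
    (hP : IsPerfMatchSet (middleGraph G) P)
    {v : V} {a e3 : G.edgeSet}
    (hav : v ∈ (a : Sym2 V)) (hae : a ≠ e3) (hve3 : v ∈ (e3 : Sym2 V))
    (hm : s(Sum.inl v, Sum.inr e3) ∈ P)
    (hcnt : {p ∈ P | ∀ x ∈ p, x ∈ K4set G v}.ncard = 1)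
    {y : V ⊕ G.edgeSet} (hp' : s(Sum.inr a, y) ∈ P) :
    y ∉ K4set G v := by
  intro hy
  rcases hy with rfl | ⟨g, hg, rfl⟩
  · have heq := unique_partner hP hp' hm (Sym2.mem_mk_right _ _) (Sym2.mem_mk_left _ _)
    have hmem : (Sum.inr a : V ⊕ G.edgeSet) ∈ s(Sum.inl v, Sum.inr e3) :=
      heq ▸ Sym2.mem_mk_left _ _
    rcases Sym2.mem_iff.mp hmem with h | h
    · exact absurd h (by simp)
    · exact hae (Sum.inr.inj h)
  · obtain ⟨c, hc⟩ := Set.ncard_eq_one.mp hcnt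
    have h1 : s(Sum.inl v, Sum.inr e3) ∈ ({c} : Set (Sym2 (V ⊕ G.edgeSet))) :=
      hc ▸ ⟨hm, vedge_sub_K4 hve3⟩
    have h2 : s(Sum.inr a, Sum.inr g) ∈ ({c} : Set (Sym2 (V ⊕ G.edgeSet))) := by
      refine hc ▸ ⟨hp', ?_⟩
      intro x hx
      rcases Sym2.mem_iff.mp hx with rfl | rfl
      · exact K4_mem_inr hav
      · exact K4_mem_inr hg
    have heq : s(Sum.inl v, Sum.inr e3) = s(Sum.inr a, Sum.inr g) := by
      rw [Set.mem_singleton_iff] at h1 h2; rw [h1, h2]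
    have : (Sum.inl v : V ⊕ G.edgeSet) ∈ s(Sum.inr a, Sum.inr g) :=
      heq ▸ Sym2.mem_mk_left _ _
    rcases Sym2.mem_iff.mp this with h | h <;> exact absurd h (by simp)

lemma cover_aux {V : Type*} [Fintype V] [DecidableEq V]
    {G : SimpleGraph V} [DecidableRel G.Adj]
    (hcubic : G.IsRegularOfDegree 3) {P : Set (Sym2 (V ⊕ G.edgeSet))}
    (hP : IsPerfMatchSet (middleGraph G) P)
    {f : G.edgeSet} {w : V} (hwf : w ∈ (f : Sym2 V))
    {y : V ⊕ G.edgeSet} (hy : y ∉ K4set G w) (hp' : s(Sum.inr f, y) ∈ P) :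
    ∃ q ∈ {q : Sym2 G.edgeSet | ∃ (v : V) (e1 e2 e3 : G.edgeSet),
        v ∈ (e1 : Sym2 V) ∧ v ∈ (e2 : Sym2 V) ∧ v ∈ (e3 : Sym2 V) ∧
        e1 ≠ e2 ∧ e1 ≠ e3 ∧ e2 ≠ e3 ∧
        s(Sum.inl v, Sum.inr e3) ∈ P ∧
        {p ∈ P | ∀ a ∈ p, a ∈ K4set G v}.ncard = 1 ∧
        q = s(e1, e2)}, f ∈ q := by
  obtain ⟨e3, hwe3, hm⟩ := vertex_partner hP w
  have hfe3 : f ≠ e3 := by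
    rintro rfl
    have heq := unique_partner hP hm hp' (Sym2.mem_mk_right _ _) (Sym2.mem_mk_left _ _)
    have : (Sum.inl w : V ⊕ G.edgeSet) ∈ s(Sum.inr f, y) := heq ▸ Sym2.mem_mk_left _ _
    rcases Sym2.mem_iff.mp this with h | h
    · exact absurd h (by simp)
    · exact hy (h ▸ K4_mem_inl)
  obtain ⟨h, hwh, hhf, hhe3, hall⟩ := third_edge G hcubic w f e3 hwf hwe3 hfe3
  have hall' : ∀ g : G.edgeSet, w ∈ (g : Sym2 V) → g = f ∨ g = e3 ∨ g = h := by
    intro g hg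
    rcases hall g hg with h' | h' | h'
    · exact Or.inl h'
    · exact Or.inr (Or.inl h')
    · exact Or.inr (Or.inr h')
  have hout : ¬ ∀ a ∈ s(Sum.inr f, y), a ∈ K4set G w :=
    fun hs => hy (hs y (Sym2.mem_mk_right _ _))
  have hcnt := count_one hP hwe3 hall' hm hp' (Sym2.mem_mk_left _ _) hout
  exact ⟨s(f, h), ⟨w, f, h, e3, hwf, hwh, hwe3, hhf.symm,
    hfe3, hhe3, hm, hcnt, rfl⟩, Sym2.mem_mk_left _ _⟩


/-- Let `G` be a connected cubic graph with an even number of edges and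
`P` a perfect matching of `M(G)`.  For each vertex `v` whose `K₄`-subgraph `G_v` contains
exactly one edge of `P`, this unique edge joins `v` to an incident edge `e₃`; letting
`e₁, e₂` be the other two edges of `G` incident with `v`, the set of all pairs
`{e₁, e₂}` so obtained is a perfect matching of the line graph `L(G)`. -/
theorem middle_graph_pm_induces_line_graph_pm {V : Type*} [Fintype V] [DecidableEq V]
    (G : SimpleGraph V) [DecidableRel G.Adj]
    (hconn : G.Connected) (hcubic : G.IsRegularOfDegree 3)
    (heven : Even G.edgeFinset.card)
    (P : Set (Sym2 (V ⊕ G.edgeSet))) (hP : IsPerfMatchSet (middleGraph G) P) :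
    IsPerfMatchSet (lineGraph G)
      {q : Sym2 G.edgeSet | ∃ (v : V) (e1 e2 e3 : G.edgeSet),
        v ∈ (e1 : Sym2 V) ∧ v ∈ (e2 : Sym2 V) ∧ v ∈ (e3 : Sym2 V) ∧
        e1 ≠ e2 ∧ e1 ≠ e3 ∧ e2 ≠ e3 ∧
        s(Sum.inl v, Sum.inr e3) ∈ P ∧
        {p ∈ P | ∀ a ∈ p, a ∈ K4set G v}.ncard = 1 ∧
        q = s(e1, e2)} := by
  refine ⟨?_, ?_, ?_⟩
  · -- subset of edge set
    rintro q ⟨v, e1, e2, e3, h1, h2, h3, h12, h13, h23, hm, hcnt, rfl⟩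
    exact (SimpleGraph.mem_edgeSet (lineGraph G)).mpr (show e1 ≠ e2 ∧ ∃ v, v ∈ (e1 : Sym2 V) ∧ v ∈ (e2 : Sym2 V) from ⟨h12, v, h1, h2⟩)
  · -- disjointness
    rintro p ⟨v, e1, e2, e3, h1, h2, h3, h12, h13, h23, hmv, hcv, rfl⟩
      q ⟨w, f1, f2, f3, g1, g2, g3, g12, g13, g23, hmw, hcw, rfl⟩ hne a hap haq
    by_cases hvw : v = w
    · subst hvw
      have he3f3 : e3 = f3 := by
        have := unique_partner hP hmv hmw (Sym2.mem_mk_left _ _) (Sym2.mem_mk_left _ _)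
        exact Sum.inr.inj (Sym2.congr_right.mp this)
      subst he3f3
      obtain ⟨t, hvt, ht1, ht2, hallv⟩ := third_edge G hcubic v e1 e2 h1 h2 h12
      have hte3 : e3 = t := by
        rcases hallv e3 h3 with h | h | h
        · exact absurd h h13.symm
        · exact absurd h h23.symm
        · exact h
      have hallv' : ∀ g : G.edgeSet, v ∈ (g : Sym2 V) → g = e1 ∨ g = e2 ∨ g = e3 := by
        intro g hg
        rcases hallv g hg with h | h | h
        · exact Or.inl h
        · exact Or.inr (Or.inl h)
        · exact Or.inr (Or.inr (h.trans hte3.symm))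
      have hf1 : f1 = e1 ∨ f1 = e2 := by
        rcases hallv' f1 g1 with h | h | h
        · exact Or.inl h
        · exact Or.inr h
        · exact absurd h g13
      have hf2 : f2 = e1 ∨ f2 = e2 := by
        rcases hallv' f2 g2 with h | h | h
        · exact Or.inl h
        · exact Or.inr h
        · exact absurd h g23
      refine hne ?_
      rcases hf1 with rfl | rfl <;> rcases hf2 with rfl | rfl
      · exact absurd rfl g12
      · rfl
      · exact Sym2.eq_swap
      · exact absurd rfl g12
    · have hav : v ∈ (a : Sym2 V) ∧ a ≠ e3 := by
        rcases Sym2.mem_iff.mp hap with rfl | rfl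
        exacts [⟨h1, h13⟩, ⟨h2, h23⟩]
      have haw : w ∈ (a : Sym2 V) ∧ a ≠ f3 := by
        rcases Sym2.mem_iff.mp haq with rfl | rfl
        exacts [⟨g1, g13⟩, ⟨g2, g23⟩]
      obtain ⟨p', hp', hap'⟩ := hP.2.2 (Sum.inr a)
      obtain ⟨y, hadj, rfl⟩ := edge_shape (hP.1 hp') hap'
      have hyv := partner_not_K4 hP hav.1 hav.2 h3 hmv hcv hp'
      have hyw := partner_not_K4 hP haw.1 haw.2 g3 hmw hcw hp'
      have haval : (a : Sym2 V) = s(v, w) := (Sym2.mem_and_mem_iff hvw).mp ⟨hav.1, haw.1⟩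
      cases y with
      | inl u =>
        have hu : u ∈ (a : Sym2 V) := hadj
        rw [haval] at hu
        rcases Sym2.mem_iff.mp hu with rfl | rfl
        · exact hyv K4_mem_inl
        · exact hyw K4_mem_inl
      | inr g =>
        obtain ⟨hag, u, hua, hug⟩ := hadj
        rw [haval] at hua
        rcases Sym2.mem_iff.mp hua with rfl | rfl
        · exact hyv (K4_mem_inr hug)
        · exact hyw (K4_mem_inr hug)
  · -- covering
    intro f
    obtain ⟨p, hp, hfp⟩ := hP.2.2 (Sum.inr f)
    obtain ⟨y, hadj, rfl⟩ := edge_shape (hP.1 hp) hfp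
    cases y with
    | inl v =>
      have hvf : v ∈ (f : Sym2 V) := hadj
      set w := Sym2.Mem.other hvf with hwdef
      have hspec : s(v, w) = (f : Sym2 V) := Sym2.other_spec hvf
      have hadjvw : G.Adj v w := by
        rw [← SimpleGraph.mem_edgeSet, hspec]; exact f.2
      have hwf : w ∈ (f : Sym2 V) := Sym2.other_mem hvf
      have hy : (Sum.inl v : V ⊕ G.edgeSet) ∉ K4set G w := by
        rintro (h | ⟨g, hg, h⟩)
        · exact hadjvw.ne (Sum.inl.inj h)
        · exact absurd h (by simp)
      exact cover_aux hcubic hP hwf hy hp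
    | inr g =>
      obtain ⟨hfg, u, huf, hug⟩ := hadj
      set w := Sym2.Mem.other huf with hwdef
      have hspec : s(u, w) = (f : Sym2 V) := Sym2.other_spec huf
      have hadjuw : G.Adj u w := by
        rw [← SimpleGraph.mem_edgeSet, hspec]; exact f.2
      have hwf : w ∈ (f : Sym2 V) := Sym2.other_mem huf
      have hy : (Sum.inr g : V ⊕ G.edgeSet) ∉ K4set G w := by
        rintro (h | ⟨g', hg', h⟩)
        · exact absurd h (by simp)
        · have hwg : w ∈ (g : Sym2 V) := by
            rw [Sum.inr.inj h]; exact hg'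
          have : (g : Sym2 V) = s(u, w) := (Sym2.mem_and_mem_iff hadjuw.ne).mp ⟨hug, hwg⟩
          exact hfg (Subtype.ext (hspec ▸ this)).symm
      exact cover_aux hcubic hP hwf hy hp
end
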